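/- arXiv:1708.02665 — 4 statements merged into one kernel-verified Lean document; each statement's English description precedes it below -/
import Mathlib

section
/- Let A be a simple unital C*-algebra. If the topological stable rank of A is finite, then A is finite (i.e., A contains no isometry that is not a unitary; equivalently, the unit 1 is not Murray–von Neumann equivalent to a proper subprojection). -/
/-- The set `Lg_n(A)` of left-generating `n`-tuples: tuples `(b 0, …, b (n-1))` such that
`∑ᵢ bᵢ* bᵢ` is invertible. -/
def Lg (A : Type*) [NormedRing A] [StarRing A] (n : ℕ) : Set (Fin n → A) :=
  {b | IsUnit (∑ i, star (b i) * b i)}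

/-- The topological stable rank of a unital (C*-)algebra: the least `n ≥ 1` such that
`Lg_n(A)` is dense in `Aⁿ`, or `∞` if there is no such `n`. -/
noncomputable def tsr (A : Type*) [NormedRing A] [StarRing A] : ℕ∞ :=
  sInf {N : ℕ∞ | ∃ n : ℕ, 1 ≤ n ∧ N = n ∧ Dense (Lg A n)}

/-- A C*-algebra is simple if it is nonzero and has no nontrivial closed two-sided ideals. -/
def CStarSimple (A : Type*) [CStarAlgebra A] : Prop :=
  (0 : A) ≠ 1 ∧ ∀ I : TwoSidedIdeal A, IsClosed (I : Set A) → I = ⊥ ∨ I = ⊤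

/-- A unital C*-algebra is finite if every isometry is a unitary (equivalently, `1` is not
Murray–von Neumann equivalent to a proper subprojection). -/
def CStarFinite (A : Type*) [CStarAlgebra A] : Prop :=
  ∀ v : A, star v * v = 1 → v * star v = 1

/-- A tracial state on a unital C*-algebra: a unital positive linear functional `τ`
with `τ(ab) = τ(ba)`. -/
def IsTracialState (A : Type*) [CStarAlgebra A] (τ : WeakDual ℂ A) : Prop :=
  τ 1 = 1 ∧ (∀ a : A, ∃ r : ℝ, 0 ≤ r ∧ τ (star a * a) = (r : ℂ)) ∧
    ∀ a b : A, τ (a * b) = τ (b * a)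

/-- The trace space `T(A)`, as a subset of the weak-* dual. -/
def TraceSpace (A : Type*) [CStarAlgebra A] : Set (WeakDual ℂ A) :=
  {τ | IsTracialState A τ}

/-- A conditional expectation from `B` onto `A`, relative to a unital embedding
`ι : A → B`: a unital positive `A`-bimodule projection of `B` onto `A`. -/
structure CondExpectation {A B : Type*} [CStarAlgebra A] [CStarAlgebra B]
    (ι : A →⋆ₐ[ℂ] B) where
  toFun : B →L[ℂ] A
  fix : ∀ a : A, toFun (ι a) = a
  left_mod : ∀ (a : A) (b : B), toFun (ι a * b) = a * toFun b
  right_mod : ∀ (a : A) (b : B), toFun (b * ι a) = toFun b * a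
  star_map : ∀ b : B, toFun (star b) = star (toFun b)
  pos : ∀ b : B, ∃ c : A, toFun (star b * b) = star c * c

/-- A quasi-basis for a conditional expectation `E`: a finite family `(v k)` in `B` with
`b = ∑ₖ vₖ E(vₖ* b) = ∑ₖ E(b vₖ) vₖ*` for all `b`. -/
def IsQuasiBasis {A B : Type*} [CStarAlgebra A] [CStarAlgebra B] {ι : A →⋆ₐ[ℂ] B}
    (E : CondExpectation ι) {n : ℕ} (v : Fin n → B) : Prop :=
  ∀ b : B, (b = ∑ k, v k * ι (E.toFun (star (v k) * b))) ∧
    (b = ∑ k, ι (E.toFun (b * v k)) * star (v k))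

/-- An inclusion `A ⊆ B` (given by the unital embedding `ι`) is of index-finite type if
there is a conditional expectation `E : B → A` admitting a finite quasi-basis. -/
def IndexFiniteType {A B : Type*} [CStarAlgebra A] [CStarAlgebra B]
    (ι : A →⋆ₐ[ℂ] B) : Prop :=
  ∃ (E : CondExpectation ι) (n : ℕ) (v : Fin n → B), IsQuasiBasis E v

/-- A realization of the (spatial/maximal, these agree in the nuclear case) C*-tensor
product of `B` and `Z`: a C*-algebra `T` together with commuting unital embeddings of `B`
and `Z` whose images generate `T` as a C*-algebra. -/
structure CStarTensor (B Z T : Type*) [CStarAlgebra B] [CStarAlgebra Z]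
    [CStarAlgebra T] where
  ι₁ : B →⋆ₐ[ℂ] T
  ι₂ : Z →⋆ₐ[ℂ] T
  inj₁ : Function.Injective ι₁
  inj₂ : Function.Injective ι₂
  comm : ∀ (b : B) (z : Z), ι₁ b * ι₂ z = ι₂ z * ι₁ b
  generates :
    (StarAlgebra.adjoin ℂ (Set.range (⇑ι₁) ∪ Set.range (⇑ι₂))).topologicalClosure = ⊤

/-- `B` absorbs `Z` tensorially: `B ⊗ Z ≅ B`. -/
def AbsorbsTensor (B Z : Type*) [CStarAlgebra B] [CStarAlgebra Z] : Prop :=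
  ∃ (T : Type) (_ : CStarAlgebra T) (_ : CStarTensor B Z T), Nonempty (T ≃⋆ₐ[ℂ] B)

/-- The n×n matrix algebra `Mₙ(ℂ)`, realized as operators on `ℂⁿ`. -/
abbrev MatrixAlg (n : ℕ) : Type :=
  EuclideanSpace ℂ (Fin n) →L[ℂ] EuclideanSpace ℂ (Fin n)

/-- A linear map between C*-algebras is completely positive if all of its matrix
amplifications preserve positivity. -/
def IsCompletelyPositive {A B : Type*} [CStarAlgebra A] [CStarAlgebra B]
    (φ : A →L[ℂ] B) : Prop :=
  ∀ (n : ℕ) (x : Matrix (Fin n) (Fin n) A), (∃ y : Matrix (Fin n) (Fin n) A, x = star y * y) →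
    ∃ z : Matrix (Fin n) (Fin n) B, x.map (⇑φ) = star z * z

/-- A C*-algebra is nuclear if the identity map can be approximated pointwise in norm by
unital completely positive maps factoring through matrix algebras. -/
def IsNuclear (A : Type*) [CStarAlgebra A] : Prop :=
  ∀ (s : Finset A) (ε : ℝ), 0 < ε →
    ∃ (n : ℕ) (φ : A →L[ℂ] MatrixAlg n) (ψ : MatrixAlg n →L[ℂ] A),
      IsCompletelyPositive φ ∧ IsCompletelyPositive ψ ∧ φ 1 = 1 ∧ ‖ψ‖ ≤ 1 ∧
      ∀ a ∈ s, ‖ψ (φ a) - a‖ < ε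

/-- The Jiang–Su algebra: the (unique) unital separable simple infinite-dimensional
nuclear C*-algebra with a unique tracial state whose K-theory agrees with that of `ℂ`;
here characterized by the listed properties together with being strongly self-absorbing. -/
structure IsJiangSuAlgebra (Z : Type*) [CStarAlgebra Z] : Prop where
  separable : TopologicalSpace.SeparableSpace Z
  simple : CStarSimple Z
  nuclear : IsNuclear Z
  infiniteDimensional : ¬ FiniteDimensional ℂ Z
  uniqueTracialState : ∃! τ : WeakDual ℂ Z, IsTracialState Z τ
  selfAbsorbing : AbsorbsTensor Z Z

/-- An action of a group `G` on a C*-algebra `A` by *-automorphisms. -/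
structure CStarAction (G : Type*) [Group G] (A : Type*) [CStarAlgebra A] where
  hom : G → (A ≃⋆ₐ[ℂ] A)
  hom_one : ∀ a : A, hom 1 a = a
  hom_mul : ∀ (g h : G) (a : A), hom (g * h) a = hom g (hom h a)

/-- A realization of the C*-crossed product `A ⋊_α G` (for `G` finite, the universal and
reduced crossed products agree): a C*-algebra `B` generated by a copy of `A` and unitaries
`u g` implementing `α`, together with the canonical faithful conditional expectation onto
`A` determined by `E(a u_g) = δ_{g,e} a`. -/
structure CrossedProduct (G : Type*) [Group G] (A : Type*) [CStarAlgebra A]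
    (α : CStarAction G A) (B : Type*) [CStarAlgebra B] where
  ι : A →⋆ₐ[ℂ] B
  inj : Function.Injective ι
  u : G → B
  u_unitary : ∀ g, star (u g) * u g = 1 ∧ u g * star (u g) = 1
  u_mul : ∀ g h, u g * u h = u (g * h)
  u_one : u 1 = 1
  covariant : ∀ (g : G) (a : A), u g * ι a * star (u g) = ι (α.hom g a)
  generates :
    (StarAlgebra.adjoin ℂ (Set.range (⇑ι) ∪ Set.range u)).topologicalClosure = ⊤
  E : B →L[ℂ] B
  E_apply_one : ∀ a : A, E (ι a * u 1) = ι a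
  E_apply_ne : ∀ (a : A) (g : G), g ≠ 1 → E (ι a * u g) = 0
  E_mem : ∀ b, E b ∈ Set.range (⇑ι)
  E_pos : ∀ b : B, ∃ a : A, E (star b * b) = ι (star a * a)
  E_faithful : ∀ b : B, E (star b * b) = 0 → b = 0

/-- Covering dimension at most `n`: every open cover has an open refinement in which each
point lies in at most `n + 1` sets. -/
def CoveringDimLe (X : Type*) [TopologicalSpace X] (n : ℕ) : Prop :=
  ∀ (I : Type) (U : I → Set X), (∀ i, IsOpen (U i)) → (⋃ i, U i) = Set.univ →
    ∃ (J : Type) (V : J → Set X), (∀ j, IsOpen (V j)) ∧ (⋃ j, V j) = Set.univ ∧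
      (∀ j, ∃ i, V j ⊆ U i) ∧
      ∀ x : X, {j | x ∈ V j}.Finite ∧ {j | x ∈ V j}.ncard ≤ n + 1

namespace TsrAux


set_option maxHeartbeats 1000000

lemma star_sub_smul_mul {A : Type*} [CStarAlgebra A] (g f : A) (t : ℝ) :
    star (g - t • f) * (g - t • f)
      = star g * g - t • (star g * f) - t • (star f * g) + (t*t) • (star f * f) := by
  simp only [star_sub, star_smul, sub_mul, mul_sub, smul_mul_assoc, mul_smul_comm,
    smul_smul, star_trivial, smul_add, smul_sub]
  abel

lemma star_pow_mul_pow {A : Type*} [CStarAlgebra A] {v : A} (hv : star v * v = 1) (p q : ℕ) :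
    (star v) ^ p * v ^ (p + q) = v ^ q := by
  induction p with
  | zero => simp
  | succ p ih =>
    have h2 : v ^ (p + 1 + q) = v * v ^ (p + q) := by
      rw [show p + 1 + q = (p + q) + 1 by omega, pow_succ']
    rw [pow_succ, h2, mul_assoc ((star v) ^ p), ← mul_assoc (star v), hv, one_mul, ih]

lemma mul_pow_eq_zero {A : Type*} [CStarAlgebra A] {a v : A} (hav : a * v = 0) {m : ℕ}
    (hm : 1 ≤ m) : a * v ^ m = 0 := by
  obtain ⟨k, rfl⟩ := Nat.exists_eq_add_of_le hm
  rw [pow_add, pow_one, ← mul_assoc, hav, zero_mul]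

lemma pow_mul_eq_zero {A : Type*} [CStarAlgebra A] {a v : A} (hva : v * a = 0) {m : ℕ}
    (hm : 1 ≤ m) : v ^ m * a = 0 := by
  obtain ⟨k, rfl⟩ := Nat.exists_eq_add_of_le hm
  rw [add_comm, pow_add, pow_one, mul_assoc, hva, mul_zero]

/-- From a proper isometry in a simple unital C*-algebra, one obtains arbitrarily many
isometries with mutually orthogonal ranges. -/
lemma orth_isometries {A : Type*} [CStarAlgebra A] (hA : CStarSimple A) {v : A}
    (hv : star v * v = 1) (hp : v * star v ≠ 1) (N : ℕ) :
    ∃ S : Fin N → A, (∀ i, star (S i) * S i = 1) ∧ ∀ i j, i ≠ j → star (S i) * S j = 0 := by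
  letI := CStarAlgebra.spectralOrder A
  haveI := CStarAlgebra.spectralOrderedRing A
  haveI : Nontrivial A := ⟨0, 1, hA.1⟩
  set a : A := 1 - v * star v with ha_def
  have hstar_a : star a = a := by simp [ha_def, star_sub, star_mul]
  have hpp : (v * star v) * (v * star v) = v * star v := by
    rw [mul_assoc, ← mul_assoc (star v), hv, one_mul]
  have ha_idem : a * a = a := by
    rw [ha_def, sub_mul, one_mul, mul_sub, mul_one, hpp]; abel
  have hav : a * v = 0 := by
    rw [ha_def, sub_mul, one_mul, mul_assoc, hv, mul_one, sub_self]
  have hva : star v * a = 0 := by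
    have := congrArg star hav
    simpa [star_mul, hstar_a] using this
  have ha_ne : a ≠ 0 := fun h0 => hp (by rw [ha_def, sub_eq_zero] at h0; exact h0.symm)
  -- the closed two-sided ideal generated by `a`
  set gen : Set A := {x | ∃ y z : A, x = y * a * z} with hgen_def
  set G : AddSubgroup A := AddSubgroup.closure gen with hG_def
  have hGmul_left : ∀ (c : A), ∀ u ∈ G, c * u ∈ G := by
    intro c u hu
    refine AddSubgroup.closure_induction (p := fun x _ => c * x ∈ G) ?_ ?_ ?_ ?_ hu
    · rintro x ⟨y, z, rfl⟩
      exact AddSubgroup.subset_closure ⟨c * y, z, by noncomm_ring⟩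
    · simpa using G.zero_mem
    · intro x y _ _ px py
      rw [mul_add]; exact add_mem px py
    · intro x _ px
      rw [mul_neg]; exact neg_mem px
  have hGmul_right : ∀ (c : A), ∀ u ∈ G, u * c ∈ G := by
    intro c u hu
    refine AddSubgroup.closure_induction (p := fun x _ => x * c ∈ G) ?_ ?_ ?_ ?_ hu
    · rintro x ⟨y, z, rfl⟩
      exact AddSubgroup.subset_closure ⟨y, z * c, by noncomm_ring⟩
    · simpa using G.zero_mem
    · intro x y _ _ px py
      rw [add_mul]; exact add_mem px py
    · intro x _ px
      rw [neg_mul]; exact neg_mem px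
  set K : AddSubgroup A := G.topologicalClosure with hK_def
  have hKcoe : (K : Set A) = closure (G : Set A) := rfl
  have hKmul_left : ∀ {c u : A}, u ∈ K → c * u ∈ K := by
    intro c u hu
    exact map_mem_closure (continuous_mul_left c) hu (fun x hx => hGmul_left c x hx)
  have hKmul_right : ∀ {c u : A}, u ∈ K → u * c ∈ K := by
    intro c u hu
    exact map_mem_closure (f := fun x => x * c) (continuous_mul_right c) hu
      (fun x hx => hGmul_right c x hx)
  set I : TwoSidedIdeal A := TwoSidedIdeal.mk' (K : Set A) K.zero_mem
    (fun hx hy => K.add_mem hx hy) (fun hx => K.neg_mem hx)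
    (fun hy => hKmul_left hy) (fun hx => hKmul_right hx) with hI_def
  have hmemI : ∀ x : A, x ∈ I ↔ x ∈ K := fun x => TwoSidedIdeal.mem_mk' _ _ _ _ _ _ x
  have haI : a ∈ I := by
    rw [hmemI]
    exact G.le_topologicalClosure (AddSubgroup.subset_closure ⟨1, 1, by simp⟩)
  have hIclosed : IsClosed (I : Set A) := by
    have : (I : Set A) = (K : Set A) := TwoSidedIdeal.coe_mk' _ _ _ _ _ _
    rw [this, hKcoe]
    exact isClosed_closure
  -- by simplicity, `I = ⊤`, hence `1` is approximated by elements of `G`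
  have hItop : I = ⊤ := by
    rcases hA.2 I hIclosed with hbot | htop
    · exfalso
      exact ha_ne (by rwa [hbot, TwoSidedIdeal.mem_bot] at haI)
    · exact htop
  have h1K : (1 : A) ∈ closure (G : Set A) := by
    have : (1 : A) ∈ I := by rw [hItop]; exact TwoSidedIdeal.mem_top _
    rwa [hmemI] at this
  obtain ⟨x, hxG, hx1⟩ : ∃ x ∈ (G : Set A), dist (1 : A) x < 1 :=
    Metric.mem_closure_iff.mp h1K 1 one_pos
  have hxu : IsUnit x := by
    have h1 : ‖1 - x‖ < 1 := by rwa [dist_eq_norm] at hx1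
    simpa [sub_sub_cancel] using isUnit_one_sub_of_norm_lt_one h1
  -- represent `x` as a finite combination `∑ y k * a * z k`
  have hrep : ∀ u ∈ G, ∃ (m : ℕ) (y z : Fin m → A), u = ∑ k, y k * a * z k := by
    intro u hu
    refine AddSubgroup.closure_induction
      (p := fun x _ => ∃ (m : ℕ) (y z : Fin m → A), x = ∑ k, y k * a * z k) ?_ ?_ ?_ ?_ hu
    · rintro x ⟨y, z, rfl⟩
      exact ⟨1, fun _ => y, fun _ => z, by simp⟩
    · exact ⟨0, Fin.elim0, Fin.elim0, by simp⟩
    · rintro x y _ _ ⟨m₁, y₁, z₁, rfl⟩ ⟨m₂, y₂, z₂, rfl⟩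
      refine ⟨m₁ + m₂, Fin.append y₁ y₂, Fin.append z₁ z₂, ?_⟩
      rw [Fin.sum_univ_add]
      simp [Fin.append_left, Fin.append_right]
    · rintro x _ ⟨m, y, z, rfl⟩
      exact ⟨m, fun k => -(y k), z, by simp [Finset.sum_neg_distrib]⟩
  obtain ⟨m, y, z, hxyz⟩ := hrep x hxG
  -- normalize so that the combination equals 1
  set Z : Fin m → A := fun k => z k * ↑hxu.unit⁻¹ with hZ_def
  have hone : ∑ k, y k * a * Z k = 1 := by
    have : ∑ k, y k * a * Z k = (∑ k, y k * a * z k) * ↑hxu.unit⁻¹ := by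
      rw [Finset.sum_mul]
      exact Finset.sum_congr rfl fun k _ => by
        simp only [hZ_def]; exact (mul_assoc _ _ _).symm
    rw [this, ← hxyz, IsUnit.mul_val_inv]
  have hm1 : 1 ≤ m := by
    by_contra hm
    have hm0 : m = 0 := by omega
    subst hm0
    have : (0:A) = 1 := by simpa using hone
    exact hA.1 this
  -- Cauchy–Schwarz-type argument: `h := ∑ (a Z k)* (a Z k)` is invertible
  set f : Fin m → A := fun k => a * star (y k) with hf_def
  set g : Fin m → A := fun k => a * Z k with hg_def
  have hstar_f : ∀ k, star (f k) = y k * a := by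
    intro k; rw [hf_def]; simp [star_mul, hstar_a]
  have hstar_g : ∀ k, star (g k) = star (Z k) * a := by
    intro k; rw [hg_def]; simp [star_mul, hstar_a]
  have hfg : ∑ k, star (f k) * g k = 1 := by
    calc ∑ k, star (f k) * g k = ∑ k, y k * a * Z k := by
          refine Finset.sum_congr rfl fun k _ => ?_
          rw [hstar_f, hg_def]
          simp only [mul_assoc]
          rw [← mul_assoc a a, ha_idem]
      _ = 1 := hone
  have hgf : ∑ k, star (g k) * f k = 1 := by
    have := congrArg star hfg
    simpa [star_sum, star_mul] using this
  set F : A := ∑ k, star (f k) * f k with hF_def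
  have hF_self : IsSelfAdjoint F := by
    simp only [hF_def, IsSelfAdjoint, star_sum, star_mul, star_star]
  have hF_ne : F ≠ 0 := by
    intro h0
    have hfk : ∀ k, f k = 0 := by
      intro k
      rw [← CStarRing.star_mul_self_eq_zero_iff]
      refine le_antisymm ?_ (star_mul_self_nonneg _)
      calc star (f k) * f k ≤ F :=
            Finset.single_le_sum (f := fun k => star (f k) * f k)
              (fun i _ => star_mul_self_nonneg _) (Finset.mem_univ k)
        _ = 0 := h0
    apply hA.1
    rw [← hfg]
    simp [hfk]
  have hFpos : (0:ℝ) < ‖F‖ := norm_pos_iff.mpr hF_ne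
  set t : ℝ := ‖F‖⁻¹ with ht_def
  have htpos : 0 < t := inv_pos.mpr hFpos
  set h : A := ∑ k, star (g k) * g k with hh_def
  have hh_nonneg : 0 ≤ h := Finset.sum_nonneg fun k _ => star_mul_self_nonneg _
  have hP : (0:A) ≤ h - (2*t) • 1 + (t*t) • F := by
    have expand : ∀ k, star (g k - t • f k) * (g k - t • f k)
        = star (g k) * g k - t • (star (g k) * f k) - t • (star (f k) * g k)
          + (t*t) • (star (f k) * f k) := fun k => star_sub_smul_mul (g k) (f k) t
    have : (0:A) ≤ ∑ k, star (g k - t • f k) * (g k - t • f k) :=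
      Finset.sum_nonneg fun k _ => star_mul_self_nonneg _
    calc (0:A) ≤ ∑ k, star (g k - t • f k) * (g k - t • f k) := this
      _ = h - (2*t) • 1 + (t*t) • F := by
          simp only [expand, Finset.sum_add_distrib, Finset.sum_sub_distrib, ← Finset.smul_sum,
            hgf, hfg, ← hh_def, ← hF_def]
          rw [two_mul, add_smul]
          abel
  have hkey : t • (1:A) ≤ h := by
    have h1 : (2*t) • (1:A) - (t*t) • F ≤ h := by
      rw [← sub_nonneg]
      calc (0:A) ≤ h - (2*t) • 1 + (t*t) • F := hP
        _ = h - ((2*t) • 1 - (t*t) • F) := by abel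
    have h2 : (t*t) • F ≤ (t*t) • (‖F‖ • (1:A)) := by
      have hFle : F ≤ ‖F‖ • (1:A) := by
        have := hF_self.le_algebraMap_norm_self
        rwa [Algebra.algebraMap_eq_smul_one] at this
      have := star_left_conjugate_le_conjugate hFle (t • 1)
      have h2'' : (t * t) • F ≤ (t * (‖F‖ * t)) • (1:A) := by
        simpa [star_smul, smul_mul_assoc, mul_smul_comm, smul_smul, mul_one, mul_comm] using this
      calc (t*t) • F ≤ (t * (‖F‖ * t)) • (1:A) := h2''
        _ = (t*t) • (‖F‖ • (1:A)) := by rw [smul_smul]; congr 1; ring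
    have h3 : (2*t) • (1:A) - (t*t) • (‖F‖ • (1:A)) ≤ (2*t) • (1:A) - (t*t) • F :=
      sub_le_sub_left h2 _
    have h4 : (2*t) • (1:A) - (t*t) • (‖F‖ • (1:A)) = t • (1:A) := by
      rw [smul_smul, ← sub_smul]
      congr 1
      rw [ht_def]
      field_simp
      ring
    calc t • (1:A) = (2*t) • (1:A) - (t*t) • (‖F‖ • (1:A)) := h4.symm
      _ ≤ (2*t) • (1:A) - (t*t) • F := h3
      _ ≤ h := h1
  have ht1_unit : IsUnit (t • (1:A)) := by
    refine ⟨⟨t • 1, t⁻¹ • 1, ?_, ?_⟩, rfl⟩ <;>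
      simp [smul_smul, mul_comm, inv_mul_cancel₀ (ne_of_gt htpos), mul_inv_cancel₀ (ne_of_gt htpos)]
  have ht1_nonneg : (0:A) ≤ t • 1 := by
    have h01 : (0:A) ≤ 1 := by simpa using star_mul_self_nonneg (1:A)
    have := star_left_conjugate_le_conjugate h01 ((Real.sqrt t) • 1)
    have hs : Real.sqrt t * Real.sqrt t = t := Real.mul_self_sqrt (le_of_lt htpos)
    simpa [star_smul, smul_mul_assoc, mul_smul_comm, smul_smul, hs] using this
  have hh_unit : IsUnit h := CStarAlgebra.isUnit_of_le _ hkey (ht1_unit.isStrictlyPositive ht1_nonneg)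
  -- inverse square root of h
  set s0 : A := CFC.sqrt h with hs0_def
  have hs0_nonneg : (0:A) ≤ s0 := CFC.sqrt_nonneg (a := h)
  have hs0_sq : s0 * s0 = h := by
    have := CFC.sq_sqrt h hh_nonneg
    rwa [sq] at this
  have hs0_star : star s0 = s0 := IsSelfAdjoint.of_nonneg hs0_nonneg
  obtain ⟨U, hU⟩ := hh_unit
  have hcomm : Commute s0 ↑U := by
    rw [hU, ← hs0_sq]
    exact (Commute.refl s0).mul_right (Commute.refl s0)
  have hcomm_inv : Commute s0 ↑U⁻¹ := hcomm.units_inv_right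
  set kk : A := ↑U⁻¹ * s0 with hkk_def
  have hk1 : s0 * kk = 1 := by
    rw [hkk_def, ← hcomm_inv.eq, ← mul_assoc, hs0_sq, ← hU, Units.mul_inv]
  have hk2 : kk * s0 = 1 := by
    rw [hkk_def, mul_assoc, hs0_sq, ← hU, Units.inv_mul]
  have hkk_star : star kk = kk := by
    have h1 : star kk * s0 = 1 := by
      rw [← hs0_star, ← star_mul, hk1, star_one]
    calc star kk = star kk * (s0 * kk) := by rw [hk1, mul_one]
      _ = (star kk * s0) * kk := by rw [mul_assoc]
      _ = kk := by rw [h1, one_mul]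
  have hkhk : kk * h * kk = 1 := by
    calc kk * h * kk = (kk * s0) * (s0 * kk) := by rw [← hs0_sq]; noncomm_ring
      _ = 1 := by rw [hk1, hk2, one_mul]
  -- the element z and its properties
  set zz : A := ∑ k : Fin m, v ^ ((k:ℕ)+1) * g k with hzz_def
  have hterm : ∀ (K : ℕ) (i j : Fin m),
      star (v ^ ((i:ℕ)+1) * g i) * (v ^ K * (v ^ ((j:ℕ)+1) * g j))
        = if (i:ℕ) = K + (j:ℕ) then star (g i) * g j else 0 := by
    intro K i j
    have hpow : star (v ^ ((i:ℕ)+1) * g i) * (v ^ K * (v ^ ((j:ℕ)+1) * g j))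
        = star (g i) * (((star v) ^ ((i:ℕ)+1) * v ^ (K + (j:ℕ) + 1)) * g j) := by
      rw [star_mul, star_pow]
      rw [show v ^ K * (v ^ ((j:ℕ)+1) * g j) = v ^ (K + (j:ℕ) + 1) * g j by
        rw [← mul_assoc, ← pow_add, ← add_assoc]]
      noncomm_ring
    rcases le_or_gt ((i:ℕ)+1) (K + (j:ℕ) + 1) with hle | hlt
    · obtain ⟨q, hq⟩ : ∃ q, K + (j:ℕ) + 1 = ((i:ℕ)+1) + q := ⟨K + (j:ℕ) - (i:ℕ), by omega⟩
      rw [hpow, hq, star_pow_mul_pow hv]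
      by_cases hij : (i:ℕ) = K + (j:ℕ)
      · have hq0 : q = 0 := by omega
        rw [if_pos hij, hq0, pow_zero, one_mul]
      · have hq1 : 1 ≤ q := by omega
        rw [if_neg hij, hstar_g i]
        have h0 : a * v ^ q = 0 := mul_pow_eq_zero hav hq1
        have hre : (star (Z i) * a) * (v ^ q * g j) = star (Z i) * ((a * v ^ q) * g j) := by
          noncomm_ring
        rw [hre, h0, zero_mul, mul_zero]
    · have hij : ¬((i:ℕ) = K + (j:ℕ)) := by omega
      rw [if_neg hij, hpow]
      obtain ⟨q, hq⟩ : ∃ q, (i:ℕ) + 1 = (K + (j:ℕ) + 1) + q := ⟨(i:ℕ) - K - (j:ℕ), by omega⟩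
      have hq1 : 1 ≤ q := by omega
      have hpow2 : (star v) ^ ((i:ℕ)+1) * v ^ (K + (j:ℕ) + 1) = (star v) ^ q := by
        have hst := congrArg star (star_pow_mul_pow hv (K + (j:ℕ) + 1) q)
        rw [star_mul, star_pow, star_pow, star_star, star_pow] at hst
        rw [hq]
        exact hst
      rw [hpow2]
      have h0 : (star v) ^ q * g j = 0 := by
        rw [hg_def]
        simp only
        rw [← mul_assoc, pow_mul_eq_zero hva hq1, zero_mul]
      rw [h0, mul_zero]
  have hdouble : ∀ K : ℕ, star zz * (v ^ K * zz)
      = ∑ i : Fin m, ∑ j : Fin m,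
          (if (i:ℕ) = K + (j:ℕ) then star (g i) * g j else 0) := by
    intro K
    rw [hzz_def, star_sum, Finset.mul_sum, Finset.sum_mul_sum]
    exact Finset.sum_congr rfl fun i _ => Finset.sum_congr rfl fun j _ => hterm K i j
  have hzz_h : star zz * zz = h := by
    have hd := hdouble 0
    rw [pow_zero, one_mul] at hd
    rw [hd, hh_def]
    refine Finset.sum_congr rfl fun i _ => ?_
    rw [Finset.sum_eq_single i]
    · simp
    · intro j _ hji
      exact if_neg (fun hc => hji (Fin.ext (by omega)))
    · intro hi
      exact absurd (Finset.mem_univ i) hi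
  have hzz_van : ∀ K : ℕ, m ≤ K → star zz * (v ^ K * zz) = 0 := by
    intro K hK
    rw [hdouble K]
    refine Finset.sum_eq_zero fun i _ => Finset.sum_eq_zero fun j _ => ?_
    exact if_neg (by have := i.isLt; omega)
  set w : A := zz * kk with hw_def
  have hw_iso : star w * w = 1 := by
    rw [hw_def, star_mul, hkk_star]
    calc kk * star zz * (zz * kk) = kk * (star zz * zz) * kk := by noncomm_ring
      _ = kk * h * kk := by rw [hzz_h]
      _ = 1 := hkhk
  have hw_van : ∀ K : ℕ, m ≤ K → star w * (v ^ K * w) = 0 := by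
    intro K hK
    rw [hw_def, star_mul, hkk_star]
    have h0 := hzz_van K hK
    calc kk * star zz * (v ^ K * (zz * kk)) = kk * (star zz * (v ^ K * zz)) * kk := by
          noncomm_ring
      _ = 0 := by rw [h0, mul_zero, zero_mul]
  -- construct the isometries
  refine ⟨fun i => v ^ (m * (i:ℕ)) * w, ?_, ?_⟩
  · intro i
    rw [star_mul, star_pow]
    have hre : star w * (star v) ^ (m * (i:ℕ)) * (v ^ (m * (i:ℕ)) * w)
        = star w * (((star v) ^ (m * (i:ℕ)) * v ^ (m * (i:ℕ) + 0)) * w) := by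
      rw [add_zero]; noncomm_ring
    rw [hre, star_pow_mul_pow hv, pow_zero, one_mul, hw_iso]
  · have key : ∀ i j : Fin N, (i:ℕ) < (j:ℕ) →
        star (v ^ (m * (i:ℕ)) * w) * (v ^ (m * (j:ℕ)) * w) = 0 := by
      intro i j hij
      obtain ⟨q, hq⟩ : ∃ q, m * (j:ℕ) = m * (i:ℕ) + q := ⟨m * (j:ℕ) - m * (i:ℕ), by
        have : m * (i:ℕ) ≤ m * (j:ℕ) := Nat.mul_le_mul_left m (le_of_lt hij)
        omega⟩
      have hqm : m ≤ q := by
        have h1 : m * ((i:ℕ) + 1) ≤ m * (j:ℕ) := Nat.mul_le_mul_left m (by omega)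
        have h2 : m * ((i:ℕ) + 1) = m * (i:ℕ) + m := by ring
        omega
      rw [star_mul, star_pow]
      have hre : star w * (star v) ^ (m * (i:ℕ)) * (v ^ (m * (j:ℕ)) * w)
          = star w * (((star v) ^ (m * (i:ℕ)) * v ^ (m * (i:ℕ) + q)) * w) := by
        rw [← hq]; noncomm_ring
      rw [hre, star_pow_mul_pow hv]
      exact hw_van q hqm
    intro i j hij
    rcases lt_or_gt_of_ne hij with hlt | hgt
    · exact key i j hlt
    · have h0 := key j i hgt
      have h1 := congrArg star h0
      simp only [star_mul, star_star, star_zero, star_pow] at h1 ⊢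
      exact h1




attribute [local instance] Matrix.linftyOpNormedRing Matrix.linftyOpNormedAlgebra

lemma matrix_complete {A : Type*} [CStarAlgebra A] (n : ℕ) :
    @CompleteSpace (Matrix (Fin n) (Fin n) A) PseudoMetricSpace.toUniformSpace :=
  inferInstanceAs (CompleteSpace (Fin n → Fin n → A))

lemma linfty_nnnorm_le {A : Type*} [CStarAlgebra A] {n : ℕ} (X : Matrix (Fin n) (Fin n) A)
    {C : NNReal} (h : ∀ i j, ‖X i j‖₊ ≤ C) : ‖X‖₊ ≤ n * C := by
  rw [Matrix.linfty_opNNNorm_def]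
  refine Finset.sup_le fun i _ => ?_
  calc ∑ j, ‖X i j‖₊ ≤ ∑ _j : Fin n, C := Finset.sum_le_sum fun j _ => h i j
    _ = n * C := by simp [Finset.sum_const, mul_comm]

lemma linfty_norm_le {A : Type*} [CStarAlgebra A] {n : ℕ} (X : Matrix (Fin n) (Fin n) A)
    {C : ℝ} (hC : 0 ≤ C) (h : ∀ i j, ‖X i j‖ ≤ C) : ‖X‖ ≤ n * C := by
  lift C to NNReal using hC
  have := linfty_nnnorm_le X (C := C) (fun i j => by
    have h2 := h i j
    rwa [← coe_nnnorm, NNReal.coe_le_coe] at h2)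
  calc ‖X‖ = ((‖X‖₊ : ℝ)) := rfl
    _ ≤ ((n * C : NNReal) : ℝ) := by exact_mod_cast this
    _ = n * C := by push_cast; ring

lemma linfty_entry_le {A : Type*} [CStarAlgebra A] {n : ℕ} (X : Matrix (Fin n) (Fin n) A)
    (i j : Fin n) : ‖X i j‖ ≤ ‖X‖ := by
  have : ‖X i j‖₊ ≤ ‖X‖₊ := by
    rw [Matrix.linfty_opNNNorm_def]
    exact le_trans (Finset.single_le_sum (f := fun k => ‖X i k‖₊) (fun k _ => zero_le)
      (Finset.mem_univ j)) (Finset.le_sup (f := fun i => ∑ j, ‖X i j‖₊) (Finset.mem_univ i))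
  exact_mod_cast this

/-- Density of `Lg A n` is impossible in the presence of `n+1` isometries with
mutually orthogonal ranges. -/
lemma no_dense_Lg {A : Type*} [CStarAlgebra A] (hnt : (0:A) ≠ 1) (n : ℕ) (hn : 1 ≤ n)
    (S : Fin (n+1) → A) (hiso : ∀ i, star (S i) * S i = 1)
    (horth : ∀ i j, i ≠ j → star (S i) * S j = 0)
    (hd : Dense (Lg A n)) : False := by
  haveI : Nontrivial A := ⟨0, 1, hnt⟩
  haveI := matrix_complete (A := A) n
  haveI : Nonempty (Fin n) := ⟨⟨0, hn⟩⟩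
  have horth' : ∀ i j : Fin (n+1), star (S i) * S j = if i = j then 1 else 0 := by
    intro i j
    by_cases hij : i = j
    · rw [if_pos hij, hij, hiso]
    · rw [if_neg hij, horth i j hij]
  have hS1 : ∀ i, ‖S i‖ = 1 := by
    intro i
    have h2 : ‖S i‖ * ‖S i‖ = 1 := by
      rw [← CStarRing.norm_star_mul_self, hiso, norm_one]
    nlinarith [norm_nonneg (S i)]
  set ε : ℝ := (8 * (n:ℝ)^2)⁻¹ with hε_def
  have hnpos : (0:ℝ) < n := by exact_mod_cast hn
  have hεpos : 0 < ε := by positivity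
  -- choose a left-generating tuple close to (star (S 0), ..., star (S (n-1)))
  set T : Fin n → A := fun i => star (S i.castSucc) with hT_def
  obtain ⟨b, hbLg, hbd⟩ : ∃ b ∈ Lg A n, dist T b < ε :=
    Metric.mem_closure_iff.mp (hd T) ε hεpos
  have hbi : ∀ i, ‖star (S i.castSucc) - b i‖ < ε := by
    intro i
    have h1 := dist_le_pi_dist T b i
    rw [dist_eq_norm] at h1
    calc ‖star (S i.castSucc) - b i‖ = ‖T i - b i‖ := by rw [hT_def]
      _ ≤ dist T b := h1
      _ < ε := hbd
  have hb : IsUnit (∑ i, star (b i) * b i) := hbLg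
  -- the matrix M i j = b i * S j is invertible
  set M : Matrix (Fin n) (Fin n) A := Matrix.of (fun i j => b i * S j.castSucc) with hM_def
  have hM_entry : ∀ i j, ‖(1 - M) i j‖ ≤ ε := by
    intro i j
    have he : (1 - M) i j = (star (S i.castSucc) - b i) * S j.castSucc := by
      rw [sub_mul, horth', Matrix.sub_apply, Matrix.one_apply, hM_def, Matrix.of_apply]
      congr 1
      simp [Fin.castSucc_inj]
    rw [he]
    calc ‖(star (S i.castSucc) - b i) * S j.castSucc‖
        ≤ ‖star (S i.castSucc) - b i‖ * ‖S j.castSucc‖ := norm_mul_le _ _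
      _ ≤ ε * 1 := by
          refine mul_le_mul (le_of_lt (hbi i)) (le_of_eq (hS1 _)) (norm_nonneg _)
            (le_of_lt hεpos)
      _ = ε := mul_one ε
  have hMnorm : ‖1 - M‖ ≤ 8⁻¹ := by
    have h1 : ‖1 - M‖ ≤ n * ε := linfty_norm_le _ (le_of_lt hεpos) hM_entry
    have h2 : (n:ℝ) * ε ≤ 8⁻¹ := by
      rw [hε_def]
      rw [mul_inv_le_iff₀ (by positivity)]
      have hn1 : (1:ℝ) ≤ n := by exact_mod_cast hn
      nlinarith
    linarith
  have hMu : IsUnit M := by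
    have := isUnit_one_sub_of_norm_lt_one (x := 1 - M) (lt_of_le_of_lt hMnorm (by norm_num))
    simpa [sub_sub_cancel] using this
  obtain ⟨Mu, hMu_eq⟩ := hMu
  set Nm : Matrix (Fin n) (Fin n) A := Units.val Mu⁻¹ with hNm_def
  have hMN : M * Nm = 1 := by rw [hNm_def, ← hMu_eq, Units.mul_inv]
  have hNM : Nm * M = 1 := by rw [hNm_def, ← hMu_eq, Units.inv_mul]
  have hNnorm : ‖Nm‖ ≤ 2 := by
    have he : Nm = 1 + (1 - M) * Nm := by
      rw [sub_mul, one_mul, hMN]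
      abel
    have h1 : ‖Nm‖ ≤ 1 + ‖1 - M‖ * ‖Nm‖ := by
      calc ‖Nm‖ = ‖1 + (1 - M) * Nm‖ := by rw [← he]
        _ ≤ ‖(1 : Matrix (Fin n) (Fin n) A)‖ + ‖(1 - M) * Nm‖ := norm_add_le _ _
        _ ≤ 1 + ‖1 - M‖ * ‖Nm‖ := by
            gcongr
            · exact le_of_eq norm_one
            · exact norm_mul_le _ _
    nlinarith [norm_nonneg Nm, hMnorm]
  -- the approximate right inverse row D
  set D : Fin n → A := fun j => ∑ k, S k.castSucc * Nm k j with hD_def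
  have hDnorm : ∀ j, ‖D j‖ ≤ 2 * n := by
    intro j
    calc ‖D j‖ ≤ ∑ k, ‖S k.castSucc * Nm k j‖ := norm_sum_le _ _
      _ ≤ ∑ _k : Fin n, 2 := by
          refine Finset.sum_le_sum fun k _ => ?_
          calc ‖S k.castSucc * Nm k j‖ ≤ ‖S k.castSucc‖ * ‖Nm k j‖ := norm_mul_le _ _
            _ ≤ 1 * 2 := by
                refine mul_le_mul (le_of_eq (hS1 _)) ?_ (norm_nonneg _) zero_le_one
                exact le_trans (linfty_entry_le Nm k j) hNnorm
            _ = 2 := one_mul 2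
      _ = 2 * n := by simp [Finset.sum_const, mul_comm]
  have hbD : ∀ i j, b i * D j = if i = j then 1 else 0 := by
    intro i j
    have h1 : b i * D j = (M * Nm) i j := by
      rw [hD_def, Matrix.mul_apply, Finset.mul_sum]
      exact Finset.sum_congr rfl fun k _ => by rw [hM_def, Matrix.of_apply, mul_assoc]
    rw [h1, hMN, Matrix.one_apply]
  -- D coincides with the canonical left inverse row of b
  set c : Fin n → A := fun i => ↑hb.unit⁻¹ * star (b i) with hc_def
  have hcb : ∑ i, c i * b i = 1 := by
    rw [hc_def]
    calc ∑ i, ↑hb.unit⁻¹ * star (b i) * b i = ↑hb.unit⁻¹ * ∑ i, star (b i) * b i := by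
          rw [Finset.mul_sum]
          exact Finset.sum_congr rfl fun i _ => by rw [mul_assoc]
      _ = 1 := hb.val_inv_mul
  have hDc : ∀ j, D j = c j := by
    intro j
    calc D j = (∑ i, c i * b i) * D j := by rw [hcb, one_mul]
      _ = ∑ i, c i * (b i * D j) := by
          rw [Finset.sum_mul]
          exact Finset.sum_congr rfl fun i _ => by rw [mul_assoc]
      _ = ∑ i, if i = j then c i else 0 := by
          refine Finset.sum_congr rfl fun i _ => ?_
          rw [hbD]
          by_cases hij : i = j
          · rw [if_pos hij, if_pos hij, mul_one]
          · rw [if_neg hij, if_neg hij, mul_zero]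
      _ = c j := by rw [Finset.sum_ite_eq' Finset.univ j c, if_pos (Finset.mem_univ j)]
  have hDb : ∑ j, D j * b j = 1 := by
    calc ∑ j, D j * b j = ∑ j, c j * b j := by
          exact Finset.sum_congr rfl fun j _ => by rw [hDc]
      _ = 1 := hcb
  -- the element u = ∑ D j (S j)* is invertible
  set u : A := ∑ j, D j * star (S j.castSucc) with hu_def
  have hu_norm : ‖1 - u‖ ≤ 4⁻¹ := by
    have he : 1 - u = ∑ j, D j * (b j - star (S j.castSucc)) := by
      rw [hu_def, ← hDb, ← Finset.sum_sub_distrib]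
      exact Finset.sum_congr rfl fun j _ => by rw [mul_sub]
    rw [he]
    calc ‖∑ j, D j * (b j - star (S j.castSucc))‖
        ≤ ∑ j, ‖D j * (b j - star (S j.castSucc))‖ := norm_sum_le _ _
      _ ≤ ∑ _j : Fin n, (2 * n) * ε := by
          refine Finset.sum_le_sum fun j _ => ?_
          calc ‖D j * (b j - star (S j.castSucc))‖
              ≤ ‖D j‖ * ‖b j - star (S j.castSucc)‖ := norm_mul_le _ _
            _ ≤ (2 * n) * ε := by
                refine mul_le_mul (hDnorm j) ?_ (norm_nonneg _) (by positivity)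
                rw [← norm_neg, neg_sub]
                exact le_of_lt (hbi j)
      _ = n * ((2 * n) * ε) := by simp [Finset.sum_const, mul_comm]
      _ = 4⁻¹ := by
          rw [hε_def]
          field_simp
          ring
  have huu : IsUnit u := by
    have := isUnit_one_sub_of_norm_lt_one (x := 1 - u) (lt_of_le_of_lt hu_norm (by norm_num))
    simpa [sub_sub_cancel] using this
  -- but u annihilates the nonzero element 1 - e
  set e : A := ∑ j : Fin n, S j.castSucc * star (S j.castSucc) with he_def
  have hSe : ∀ j : Fin n, star (S j.castSucc) * e = star (S j.castSucc) := by
    intro j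
    rw [he_def, Finset.mul_sum]
    calc ∑ k : Fin n, star (S j.castSucc) * (S k.castSucc * star (S k.castSucc))
        = ∑ k : Fin n, if j = k then star (S k.castSucc) else 0 := by
          refine Finset.sum_congr rfl fun k _ => ?_
          rw [← mul_assoc, horth']
          simp only [Fin.castSucc_inj]
          by_cases hjk : j = k
          · rw [if_pos hjk, if_pos hjk, one_mul]
          · rw [if_neg hjk, if_neg hjk, zero_mul]
      _ = star (S j.castSucc) := by
          rw [Finset.sum_ite_eq Finset.univ j (fun k : Fin n => star (S k.castSucc)),
            if_pos (Finset.mem_univ j)]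
  have hue : u * e = u := by
    rw [hu_def, Finset.sum_mul]
    exact Finset.sum_congr rfl fun j _ => by rw [mul_assoc, hSe]
  have h1e : (1 : A) - e = 0 := by
    have h0 : u * (1 - e) = 0 := by rw [mul_sub, mul_one, hue, sub_self]
    calc (1:A) - e = ↑huu.unit⁻¹ * (u * (1 - e)) := by
          rw [← mul_assoc, huu.val_inv_mul, one_mul]
      _ = 0 := by rw [h0, mul_zero]
  have heS : e * S (Fin.last n) = 0 := by
    rw [he_def, Finset.sum_mul]
    refine Finset.sum_eq_zero fun j _ => ?_
    rw [mul_assoc, horth _ _ (Fin.castSucc_lt_last j).ne, mul_zero]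
  have hlast : S (Fin.last n) = 0 := by
    have h1 : (1:A) = e := by rwa [sub_eq_zero] at h1e
    calc S (Fin.last n) = 1 * S (Fin.last n) := (one_mul _).symm
      _ = e * S (Fin.last n) := by rw [h1]
      _ = 0 := heS
  apply hnt
  calc (0:A) = star (S (Fin.last n)) * S (Fin.last n) := by rw [hlast, star_zero, mul_zero]
    _ = 1 := hiso _

end TsrAux

/-- a simple unital C*-algebra with finite topological stable rank is
finite (every isometry is a unitary). -/
theorem finite_of_tsr_ne_top (A : Type*) [CStarAlgebra A]
    (hA : CStarSimple A) (h : tsr A ≠ ⊤) : CStarFinite A := by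
  intro v hv
  by_contra hp
  have hexists : ∃ n : ℕ, 1 ≤ n ∧ Dense (Lg A n) := by
    by_contra hne
    push_neg at hne
    apply h
    unfold tsr
    convert sInf_empty
    · rfl
    rw [Set.eq_empty_iff_forall_notMem]
    rintro N ⟨n, hn1, rfl, hdense⟩
    exact hne n hn1 hdense
  obtain ⟨n, hn1, hdense⟩ := hexists
  obtain ⟨S, hiso, horth⟩ := TsrAux.orth_isometries hA hv hp (n + 1)
  exact TsrAux.no_dense_Lg hA.1 n hn1 S hiso horth hdense
end

section
/- If a simple unital C*-algebra A contains an isometry v (v*v = 1) with vv* ≠ 1, then its topological stable rank is infinite. -/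
namespace TsrAux
variable {A : Type*} [CStarAlgebra A]

lemma isom_pow {v : A} (hv : star v * v = 1) (k : ℕ) : star (v ^ k) * v ^ k = 1 := by
  induction k with
  | zero => simp
  | succ n ih =>
    rw [pow_succ, star_mul, mul_assoc, ← mul_assoc (star (v ^ n)), ih, one_mul, hv]

lemma star_pow_mul_pow_s1 {v : A} (hv : star v * v = 1) {i j : ℕ} (hij : i ≤ j) :
    star (v ^ i) * v ^ j = v ^ (j - i) := by
  have h1 : v ^ j = v ^ i * v ^ (j - i) := by rw [← pow_add, Nat.add_sub_cancel' hij]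
  rw [h1, ← mul_assoc, isom_pow hv, one_mul]

lemma star_pow_mul_pow' {v : A} (hv : star v * v = 1) {i j : ℕ} (hij : j ≤ i) :
    star (v ^ i) * v ^ j = star (v ^ (i - j)) := by
  have h1 : v ^ i = v ^ j * v ^ (i - j) := by rw [← pow_add, Nat.add_sub_cancel' hij]
  rw [h1, star_mul, mul_assoc, isom_pow hv, mul_one]

lemma psa {v : A} : star (1 - v * star v) = 1 - v * star v := by
  simp [star_sub, star_mul]

lemma pmul {v : A} (hv : star v * v = 1) : (1 - v * star v) * v = 0 := by
  rw [sub_mul, one_mul, mul_assoc, hv, mul_one, sub_self]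

lemma pmulpow {v : A} (hv : star v * v = 1) {k : ℕ} (hk : k ≠ 0) :
    (1 - v * star v) * v ^ k = 0 := by
  obtain ⟨t, rfl⟩ := Nat.exists_eq_succ_of_ne_zero hk
  rw [pow_succ', ← mul_assoc, pmul hv, zero_mul]

lemma ppr {v : A} (hv : star v * v = 1) :
    (1 - v * star v) * (1 - v * star v) = 1 - v * star v := by
  have h2 : v * star v * (v * star v) = v * star v := by
    rw [mul_assoc, ← mul_assoc (star v), hv, one_mul]
  rw [sub_mul, one_mul, mul_sub, mul_one, h2, sub_self, sub_zero]

lemma orth {v : A} (hv : star v * v = 1) (i j : ℕ) :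
    (1 - v * star v) * (star (v ^ i) * v ^ j) * (1 - v * star v)
      = if i = j then 1 - v * star v else 0 := by
  rcases le_or_gt i j with hij | hij
  · rw [star_pow_mul_pow_s1 hv hij]
    rcases eq_or_ne i j with rfl | hne
    · simp [ppr hv]
    · have hne' : j - i ≠ 0 := by omega
      rw [if_neg hne, pmulpow hv hne', zero_mul]
  · have hne : i ≠ j := by omega
    have hle : j ≤ i := le_of_lt hij
    rw [star_pow_mul_pow' hv hle, if_neg hne]
    have h0 : (1 - v * star v) * v ^ (i - j) * (1 - v * star v) = 0 := by
      rw [pmulpow hv (by omega : i - j ≠ 0), zero_mul]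
    calc (1 - v * star v) * star (v ^ (i-j)) * (1 - v * star v)
        = star ((1 - v * star v) * v ^ (i-j) * (1 - v * star v)) := by
          simp only [star_mul, psa, mul_assoc]
      _ = 0 := by rw [h0, star_zero]

lemma ortho_family {u w : A} (hu : star u * u = 1) (hw : star w * w = 1)
    (huw : star u * w = 0) (k l : ℕ) :
    star (u ^ k * w) * (u ^ l * w) = if k = l then 1 else 0 := by
  have hwu : star w * u = 0 := by
    have h := congrArg star huw
    rwa [star_mul, star_star, star_zero] at h
  have main : ∀ k l : ℕ, k ≤ l → star (u ^ k * w) * (u ^ l * w) = if k = l then 1 else 0 := by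
    intro k l hkl
    have h1 : star (u ^ k * w) * (u ^ l * w) = star w * (star (u ^ k) * u ^ l) * w := by
      simp only [star_mul, mul_assoc]
    rw [h1, star_pow_mul_pow_s1 hu hkl]
    rcases eq_or_ne k l with rfl | hne
    · simp [hw]
    · rw [if_neg hne]
      obtain ⟨t, ht⟩ : ∃ t, l - k = t + 1 := ⟨l - k - 1, by omega⟩
      rw [ht, pow_succ', ← mul_assoc, hwu, zero_mul, zero_mul]
  rcases le_or_gt k l with hkl | hlk
  · exact main k l hkl
  · have hne : k ≠ l := by omega
    have hne' : l ≠ k := by omega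
    have h2 := congrArg star (main l k (le_of_lt hlk))
    rw [if_neg hne', star_mul, star_star, star_zero] at h2
    rw [h2, if_neg hne]

lemma exists_repr (hA : CStarSimple A) {p : A} (hp : p ≠ 0) :
    ∃ (m : ℕ) (a b : Fin m → A), (1 : A) = ∑ i, a i * p * b i := by
  classical
  set T : Set A := {t | ∃ x y : A, t = x * p * y} with hT
  set J : Submodule ℂ A := Submodule.span ℂ T with hJ
  set C : Set A := closure (J : Set A) with hC
  have hJl : ∀ (x : A) {z : A}, z ∈ J → x * z ∈ J := by
    intro x z hz
    induction hz using Submodule.span_induction with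
    | mem t ht =>
      obtain ⟨x', y', rfl⟩ := ht
      exact Submodule.subset_span ⟨x * x', y', by noncomm_ring⟩
    | zero => simpa using J.zero_mem
    | add a b _ _ ha hb => rw [mul_add]; exact J.add_mem ha hb
    | smul c a _ ha => rw [mul_smul_comm]; exact J.smul_mem c ha
  have hJr : ∀ (y : A) {z : A}, z ∈ J → z * y ∈ J := by
    intro y z hz
    induction hz using Submodule.span_induction with
    | mem t ht =>
      obtain ⟨x', y', rfl⟩ := ht
      exact Submodule.subset_span ⟨x', y' * y, by noncomm_ring⟩
    | zero => simpa using J.zero_mem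
    | add a b _ _ ha hb => rw [add_mul]; exact J.add_mem ha hb
    | smul c a _ ha => rw [smul_mul_assoc]; exact J.smul_mem c ha
  let I : TwoSidedIdeal A := TwoSidedIdeal.mk' C
    (subset_closure J.zero_mem)
    (fun hx hy => map_mem_closure₂ continuous_add hx hy fun _ ha _ hb => J.add_mem ha hb)
    (fun hx => map_mem_closure continuous_neg hx fun _ ha => J.neg_mem ha)
    (fun {x y} hy => map_mem_closure (continuous_mul_left x) hy
      fun _ ha => hJl x ha)
    (fun {x y} hx => map_mem_closure (f := fun b => b * y) (continuous_mul_right y) hx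
      fun _ ha => hJr y ha)
  have hIC : (I : Set A) = C := TwoSidedIdeal.coe_mk' _ _ _ _ _ _
  have hclosed : IsClosed (I : Set A) := by rw [hIC]; exact isClosed_closure
  have hpI : p ∈ I := by
    rw [show (p ∈ I) ↔ p ∈ C from Iff.of_eq (congrArg (p ∈ ·) hIC)]
    exact subset_closure (Submodule.subset_span ⟨1, 1, by noncomm_ring⟩)
  rcases hA.2 I hclosed with hbot | htop
  · exact absurd (by rwa [hbot, TwoSidedIdeal.mem_bot] at hpI) hp
  · have h1C : (1 : A) ∈ C := by
      have h1I : (1 : A) ∈ I := by rw [htop]; exact TwoSidedIdeal.mem_top _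
      rwa [show ((1:A) ∈ I) ↔ (1:A) ∈ C from Iff.of_eq (congrArg ((1:A) ∈ ·) hIC)] at h1I
    rw [hC, Metric.mem_closure_iff] at h1C
    obtain ⟨z, hzJ, hz1⟩ := h1C (1 : ℝ) one_pos
    have hzu : IsUnit z := by
      have h' : ‖(1 : A) - z‖ < 1 := by rwa [← dist_eq_norm]
      have h'' := (Units.oneSub ((1:A) - z) h').isUnit
      rwa [Units.val_oneSub, sub_sub_cancel] at h''
    obtain ⟨u, hu⟩ := hzu
    rw [SetLike.mem_coe, hJ, Submodule.mem_span_set'] at hzJ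
    obtain ⟨m, f, g, hsum⟩ := hzJ
    choose x y hxy using fun i => (g i).2
    refine ⟨m, fun i => ↑u⁻¹ * (f i • x i), fun i => y i, ?_⟩
    have hrw : ∑ i, (↑u⁻¹ * (f i • x i)) * p * y i = ↑u⁻¹ * ∑ i, f i • ((g i : A)) := by
      rw [Finset.mul_sum]
      refine Finset.sum_congr rfl fun i _ => ?_
      simp only [hxy i, smul_mul_assoc, mul_smul_comm, mul_assoc]
    rw [hrw, hsum, ← hu, Units.inv_mul]

section Order
variable [PartialOrder A] [StarOrderedRing A]

lemma rsmul_nonneg {r : ℝ} (hr : 0 ≤ r) {q : A} (hq : 0 ≤ q) : 0 ≤ r • q := by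
  have hsa : IsSelfAdjoint (CFC.sqrt q) := .of_nonneg (CFC.sqrt_nonneg q)
  have hsq : CFC.sqrt q * CFC.sqrt q = q := by
    have h := CFC.sq_sqrt q hq
    rwa [pow_two] at h
  have h2 : r • q = star (Real.sqrt r • CFC.sqrt q) * (Real.sqrt r • CFC.sqrt q) := by
    rw [star_smul, hsa.star_eq, smul_mul_smul_comm, star_trivial, Real.mul_self_sqrt hr, hsq]
  rw [h2]
  exact star_mul_self_nonneg _

lemma h_unit (h01 : (0:A) ≠ 1) {m : ℕ} {p : A}
    (hpp : p * p = p) (hps : star p = p) (a b : Fin m → A)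
    (hz : (1:A) = ∑ i, a i * p * b i) : IsUnit (∑ i, star (b i) * p * b i) := by
  classical
  have hp0 : 0 ≤ p := by
    have hpe : p = star p * p := by rw [hps, hpp]
    exact hpe ▸ star_mul_self_nonneg p
  have h01' : (0:A) ≤ 1 := by simpa using star_mul_self_nonneg (1:A)
  rcases Nat.eq_zero_or_pos m with rfl | hm
  · simp only [Finset.univ_eq_empty, Finset.sum_empty] at hz
    exact absurd hz.symm h01
  have hppb : ∀ i : Fin m, p * (p * b i) = p * b i := fun i => by rw [← mul_assoc, hpp]
  set T : Fin m → A := fun i => (a i * p) * (p * b i) with hTdef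
  have hT1 : ∑ i, T i = 1 := by
    rw [hz]
    exact Finset.sum_congr rfl fun i _ => by simp only [hTdef, mul_assoc, hppb i]
  set S : A := ∑ i, star (T i) * T i with hSdef
  have hS0 : 0 ≤ S := Finset.sum_nonneg fun i _ => star_mul_self_nonneg _
  have Q1 : (∑ i : Fin m, ∑ _j : Fin m, star (T i) * T i) = m • S := by
    simp only [Finset.sum_const, Finset.card_univ, Fintype.card_fin]
    rw [← Finset.smul_sum]
  have Q2 : (∑ _i : Fin m, ∑ j : Fin m, star (T j) * T j) = m • S := by
    rw [← hSdef, Finset.sum_const, Finset.card_univ, Fintype.card_fin]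
  have hstar1 : (∑ j : Fin m, star (T j)) = 1 := by rw [← star_sum, hT1, star_one]
  have Q3 : (∑ i : Fin m, ∑ j : Fin m, star (T i) * T j) = 1 := by
    have h' : ∀ i, (∑ j : Fin m, star (T i) * T j) = star (T i) := by
      intro i; rw [← Finset.mul_sum, hT1, mul_one]
    simp only [h']
    exact hstar1
  have Q4 : (∑ _i : Fin m, ∑ j : Fin m, star (T j) * T _i) = 1 := by
    have h' : ∀ i, (∑ j : Fin m, star (T j) * T i) = T i := by
      intro i; rw [← Finset.sum_mul, hstar1, one_mul]
    simp only [h']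
    exact hT1
  have hdouble : (∑ i : Fin m, ∑ j : Fin m, star (T i - T j) * (T i - T j))
      = m • S + m • S - 1 - 1 := by
    have expand : ∀ i j : Fin m, star (T i - T j) * (T i - T j)
        = (star (T i) * T i - star (T i) * T j) - (star (T j) * T i - star (T j) * T j) := by
      intro i j
      rw [star_sub, sub_mul, mul_sub, mul_sub]
    simp only [expand, Finset.sum_sub_distrib]
    rw [Q1, Q2, Q3, Q4]
    abel
  have hpos : (0:A) ≤ ∑ i : Fin m, ∑ j : Fin m, star (T i - T j) * (T i - T j) :=
    Finset.sum_nonneg fun i _ => Finset.sum_nonneg fun j _ => star_mul_self_nonneg _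
  have key : (1:A) + 1 ≤ m • S + m • S := by
    rw [hdouble, sub_sub] at hpos
    exact sub_nonneg.mp hpos
  have h2 : IsUnit ((1:A) + 1) := by
    have h2c : IsUnit (2:ℂ) := by norm_num
    have hm2 := h2c.map (algebraMap ℂ A)
    rw [map_ofNat] at hm2
    rwa [one_add_one_eq_two]
  have hMS : IsUnit (m • S + m • S) :=
    CStarAlgebra.isUnit_of_le _ key (h2.isStrictlyPositive (add_nonneg h01' h01'))
  have hrw : m • S + m • S = ((2 * m : ℕ) : A) * S := by
    rw [nsmul_eq_mul]
    push_cast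
    rw [two_mul, add_mul]
  have hcu : IsUnit (((2 * m : ℕ) : A)) := by
    have hne : ((2 * m : ℕ) : ℂ) ≠ 0 := Nat.cast_ne_zero.mpr (by omega)
    have h' := (isUnit_iff_ne_zero.mpr hne).map (algebraMap ℂ A)
    rwa [map_natCast] at h'
  have hS : IsUnit S := by
    rw [hrw] at hMS
    have h' := hcu.unit⁻¹.isUnit.mul hMS
    rwa [← mul_assoc, IsUnit.val_inv_mul, one_mul] at h'
  set B : ℝ := ∑ j : Fin m, ‖a j * p‖^2 with hBdef
  have hqi : ∀ i, (0:A) ≤ star (b i) * p * b i := fun i => star_left_conjugate_nonneg hp0 (b i)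
  have hterm : ∀ i : Fin m, star (T i) * T i ≤ B • (star (b i) * p * b i) := by
    intro i
    have e1 : star (T i) * T i = star (p * b i) * (star (a i * p) * (a i * p)) * (p * b i) := by
      simp only [hTdef, star_mul, mul_assoc]
    have e2 : star (p * b i) * (star (a i * p) * (a i * p)) * (p * b i)
        ≤ star (p * b i) * (algebraMap ℝ A (‖a i * p‖^2)) * (p * b i) :=
      star_left_conjugate_le_conjugate CStarAlgebra.star_mul_le_algebraMap_norm_sq _
    have e3 : star (p * b i) * (algebraMap ℝ A (‖a i * p‖^2)) * (p * b i)
        = ‖a i * p‖^2 • (star (b i) * p * b i) := by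
      rw [Algebra.algebraMap_eq_smul_one, mul_smul_comm, mul_one, smul_mul_assoc]
      congr 1
      simp only [star_mul, hps, mul_assoc, hppb i]
    have e4 : ‖a i * p‖^2 • (star (b i) * p * b i) ≤ B • (star (b i) * p * b i) := by
      have hle : ‖a i * p‖^2 ≤ B :=
        Finset.single_le_sum (f := fun j => ‖a j * p‖^2) (fun j _ => sq_nonneg _)
          (Finset.mem_univ i)
      have hd : 0 ≤ (B - ‖a i * p‖^2) • (star (b i) * p * b i) :=
        rsmul_nonneg (by linarith) (hqi i)
      calc ‖a i * p‖^2 • (star (b i) * p * b i)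
          ≤ ‖a i * p‖^2 • (star (b i) * p * b i)
            + (B - ‖a i * p‖^2) • (star (b i) * p * b i) := le_add_of_nonneg_right hd
        _ = B • (star (b i) * p * b i) := by rw [← add_smul]; norm_num
    calc star (T i) * T i = _ := e1
      _ ≤ _ := e2
      _ = _ := e3
      _ ≤ _ := e4
  have hSle : S ≤ B • (∑ i, star (b i) * p * b i) := by
    rw [Finset.smul_sum]
    exact Finset.sum_le_sum fun i _ => hterm i
  have hBh : IsUnit (B • (∑ i, star (b i) * p * b i)) :=
    CStarAlgebra.isUnit_of_le _ hSle (hS.isStrictlyPositive hS0)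
  by_cases hB : B = 0
  · rw [hB, zero_smul] at hBh
    exact absurd (isUnit_zero_iff.mp hBh) h01
  · have final : (∑ i, star (b i) * p * b i)
        = algebraMap ℝ A B⁻¹ * (B • ∑ i, star (b i) * p * b i) := by
      rw [← Algebra.smul_def, smul_smul, inv_mul_cancel₀ hB, one_smul]
    rw [final]
    exact ((algebraMap ℝ A).isUnit_map (isUnit_iff_ne_zero.mpr (inv_ne_zero hB))).mul hBh

lemma exists_w (hA : CStarSimple A) {v : A}
    (hv : star v * v = 1) (hv' : v * star v ≠ 1) :
    ∃ u w : A, star u * u = 1 ∧ star w * w = 1 ∧ star u * w = 0 := by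
  classical
  set p : A := 1 - v * star v with hpdef
  have hpne : p ≠ 0 := sub_ne_zero.mpr (Ne.symm hv')
  have hpp : p * p = p := by rw [hpdef]; exact ppr hv
  have hps : star p = p := by rw [hpdef]; exact psa
  have hp0 : 0 ≤ p := by
    have hpe : p = star p * p := by rw [hps, hpp]
    exact hpe ▸ star_mul_self_nonneg p
  have hpv : ∀ {k : ℕ}, k ≠ 0 → p * v ^ k = 0 := by
    intro k hk; rw [hpdef]; exact pmulpow hv hk
  have horth : ∀ i j : ℕ, p * (star (v ^ i) * v ^ j) * p = if i = j then p else 0 := by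
    intro i j; rw [hpdef]; exact orth hv i j
  obtain ⟨m, a, b, hz⟩ := exists_repr hA hpne
  rcases Nat.eq_zero_or_pos m with rfl | hm
  · simp only [Finset.univ_eq_empty, Finset.sum_empty] at hz
    exact absurd hz.symm hA.1
  have hh : IsUnit (∑ i, star (b i) * p * b i) := h_unit hA.1 hpp hps a b hz
  set h : A := ∑ i, star (b i) * p * b i with hhdef
  have hh0 : 0 ≤ h := Finset.sum_nonneg fun i _ => star_left_conjugate_nonneg hp0 (b i)
  have hhsa : star h = h := by
    rw [hhdef, star_sum]
    exact Finset.sum_congr rfl fun i _ => by simp only [star_mul, star_star, hps, mul_assoc]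
  set g : A := ↑hh.unit⁻¹ with hgdef
  have hhg : h * g = 1 := hh.mul_val_inv
  have hgh : g * h = 1 := hh.val_inv_mul
  have hgsa : star g = g := by
    have h1 : star g * h = 1 := by
      have h2 := congrArg star hhg
      rwa [star_mul, hhsa, star_one] at h2
    calc star g = star g * (h * g) := by rw [hhg, mul_one]
      _ = (star g * h) * g := by rw [mul_assoc]
      _ = g := by rw [h1, one_mul]
  have hg0 : 0 ≤ g := by
    have h3 : star g * h * g = g := by
      rw [hgsa, hgh, one_mul]
    exact h3 ▸ star_left_conjugate_nonneg hh0 g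
  set q : A := CFC.sqrt g with hqdef
  have hq0 : 0 ≤ q := CFC.sqrt_nonneg g
  have hqsa : star q = q := (IsSelfAdjoint.of_nonneg hq0).star_eq
  have hqq : q * q = g := by
    have h4 := CFC.sq_sqrt g hg0
    rw [pow_two] at h4
    rw [hqdef]
    exact h4
  have hqg : q * g = g * q := by rw [← hqq, mul_assoc]
  have hcomm : h * q = q * h := by
    calc h * q = h * q * (g * h) := by rw [hgh, mul_one]
      _ = h * (q * g) * h := by simp only [mul_assoc]
      _ = h * (g * q) * h := by rw [hqg]
      _ = q * h := by rw [← mul_assoc h g q, hhg, one_mul]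
  set w' : A := ∑ i : Fin m, v ^ (i:ℕ) * p * b i with hw'def
  have hkey : ∀ (i j : ℕ) (x y : A),
      star (v ^ i * p * x) * (v ^ j * p * y)
        = star x * ((p * (star (v ^ i) * v ^ j) * p) * y) := by
    intro i j x y
    simp only [star_mul, hps, mul_assoc]
  have hw'w' : star w' * w' = h := by
    rw [hw'def, star_sum, Finset.sum_mul_sum, hhdef]
    refine Finset.sum_congr rfl fun i _ => ?_
    have hterm : ∀ j : Fin m, star (v ^ (i:ℕ) * p * b i) * (v ^ (j:ℕ) * p * b j)
        = if i = j then star (b i) * p * b i else 0 := by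
      intro j
      rw [hkey, horth]
      rcases eq_or_ne i j with rfl | hne
      · rw [if_pos rfl, if_pos rfl, ← mul_assoc]
      · rw [if_neg (fun hc => hne (Fin.val_injective hc)), if_neg hne, zero_mul, mul_zero]
    simp only [hterm]
    rw [Finset.sum_ite_eq]
    simp
  have hvw' : star (v ^ m) * w' = 0 := by
    rw [hw'def, Finset.mul_sum]
    refine Finset.sum_eq_zero fun i _ => ?_
    have h5 : star (v ^ m) * v ^ (i:ℕ) = star (v ^ (m - (i:ℕ))) :=
      star_pow_mul_pow' hv (le_of_lt i.isLt)
    have h6 : star (v ^ (m - (i:ℕ))) * p = 0 := by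
      have h7 := congrArg star (hpv (show m - (i:ℕ) ≠ 0 by have := i.isLt; omega))
      rwa [star_mul, hps, star_zero] at h7
    calc star (v ^ m) * (v ^ (i:ℕ) * p * b i)
        = star (v ^ m) * v ^ (i:ℕ) * p * b i := by simp only [mul_assoc]
      _ = 0 := by rw [h5, h6, zero_mul]
  refine ⟨v ^ m, w' * q, isom_pow hv m, ?_, ?_⟩
  · rw [star_mul, hqsa, mul_assoc, ← mul_assoc (star w'), hw'w', hcomm, ← mul_assoc, hqq, hgh]
  · rw [← mul_assoc, hvw', zero_mul]

end Order
end TsrAux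

/-- a simple unital C*-algebra containing a proper isometry has infinite
topological stable rank. -/
theorem tsr_eq_top_of_proper_isometry (A : Type*) [CStarAlgebra A]
    (hA : CStarSimple A) (v : A) (hv : star v * v = 1) (hv' : v * star v ≠ 1) :
    tsr A = ⊤ := by
  classical
  letI : PartialOrder A := CStarAlgebra.spectralOrder A
  haveI : StarOrderedRing A := CStarAlgebra.spectralOrderedRing A
  haveI : Nontrivial A := nontrivial_of_ne 0 1 hA.1
  have hnd : ∀ n : ℕ, 1 ≤ n → ¬ Dense (Lg A n) := by
    intro n hn hdense
    obtain ⟨u, w, hu, hw, huw⟩ := TsrAux.exists_w hA hv hv'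
    set s : Fin n → A := fun k => u ^ (k:ℕ) * w with hsdef
    have hss : ∀ k l : Fin n, star (s k) * s l = if k = l then 1 else 0 := by
      intro k l
      simp only [hsdef]
      rw [TsrAux.ortho_family hu hw huw]
      simp [Fin.val_eq_val]
    set W : A := u ^ n * w with hWdef
    have hsW : ∀ k : Fin n, star (s k) * W = 0 := by
      intro k
      simp only [hsdef, hWdef]
      rw [TsrAux.ortho_family hu hw huw, if_neg (Nat.ne_of_lt k.isLt)]
    have hWW : star W * W = 1 := by
      simp only [hWdef]
      rw [TsrAux.ortho_family hu hw huw, if_pos rfl]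
    set p' : A := ∑ k, s k * star (s k) with hp'def
    have hp's : ∀ j, p' * s j = s j := by
      intro j
      rw [hp'def, Finset.sum_mul]
      have hterm : ∀ k : Fin n, s k * star (s k) * s j = if k = j then s k else 0 := by
        intro k
        rw [mul_assoc, hss k j]
        rcases eq_or_ne k j with rfl | hne
        · rw [if_pos rfl, if_pos rfl, mul_one]
        · rw [if_neg hne, if_neg hne, mul_zero]
      simp only [hterm]
      rw [Finset.sum_ite_eq']
      simp
    have hp'W : p' * W = 0 := by
      rw [hp'def, Finset.sum_mul]
      refine Finset.sum_eq_zero fun k _ => ?_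
      rw [mul_assoc, hsW k, mul_zero]
    have hp'sa : star p' = p' := by
      rw [hp'def, star_sum]
      exact Finset.sum_congr rfl fun k _ => by rw [star_mul, star_star]
    have hp'p' : p' * p' = p' := by
      nth_rewrite 2 [hp'def]
      rw [Finset.mul_sum]
      have hterm : ∀ k : Fin n, p' * (s k * star (s k)) = s k * star (s k) := by
        intro k; rw [← mul_assoc, hp's k]
      simp only [hterm]
      exact hp'def.symm
    have hp'n : ‖p'‖ ≤ 1 := by
      rcases eq_or_ne p' 0 with h0 | h0
      · rw [h0, norm_zero]; norm_num
      · have h1 : ‖p'‖ * ‖p'‖ = ‖p'‖ := by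
          calc ‖p'‖ * ‖p'‖ = ‖star p' * p'‖ := (CStarRing.norm_star_mul_self).symm
            _ = ‖p'‖ := by rw [hp'sa, hp'p']
        have h2 : ‖p'‖ ≠ 0 := norm_ne_zero_iff.mpr h0
        have h3 : ‖p'‖ = 1 := mul_right_cancel₀ h2 (by rw [h1, one_mul])
        rw [h3]
    have hsn : ∀ k, ‖s k‖ = 1 := by
      intro k
      have h1 : ‖s k‖ * ‖s k‖ = 1 := by
        rw [← CStarRing.norm_star_mul_self, hss k k, if_pos rfl, norm_one]
      rcases mul_self_eq_one_iff.mp h1 with h | h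
      · exact h
      · nlinarith [norm_nonneg (s k)]
    have hpos : (0:ℝ) < 1 / (n + 1) := by positivity
    obtain ⟨b, hball, hbLg⟩ := (Metric.dense_iff.mp hdense) (fun k => star (s k)) _ hpos
    have hbk : ∀ k, ‖b k - star (s k)‖ < 1 / (n + 1) := by
      intro k
      calc ‖b k - star (s k)‖ = dist (b k) (star (s k)) := (dist_eq_norm _ _).symm
        _ ≤ dist b (fun k => star (s k)) := dist_le_pi_dist b (fun k => star (s k)) k
        _ < 1 / (n + 1) := Metric.mem_ball.mp hball
    have hD : IsUnit (∑ k, star (b k) * b k) := hbLg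
    set c : A := ∑ k, s k * b k with hcdef
    have hcc : star c * c = ∑ k, star (b k) * b k := by
      rw [hcdef, star_sum, Finset.sum_mul_sum]
      have hterm : ∀ k l : Fin n, star (s k * b k) * (s l * b l)
          = if k = l then star (b k) * b k else 0 := by
        intro k l
        have e : star (s k * b k) * (s l * b l) = star (b k) * ((star (s k) * s l) * b l) := by
          simp only [star_mul, mul_assoc]
        rw [e, hss k l]
        rcases eq_or_ne k l with rfl | hne
        · rw [if_pos rfl, if_pos rfl, one_mul]
        · rw [if_neg hne, if_neg hne, zero_mul, mul_zero]
      simp only [hterm]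
      refine Finset.sum_congr rfl fun k _ => ?_
      rw [Finset.sum_ite_eq]
      simp
    have hp'c : p' * c = c := by
      rw [hcdef, Finset.mul_sum]
      refine Finset.sum_congr rfl fun k _ => ?_
      rw [← mul_assoc, hp's k]
    have hsub : c - p' = ∑ k, s k * (b k - star (s k)) := by
      rw [hcdef, hp'def, ← Finset.sum_sub_distrib]
      exact Finset.sum_congr rfl fun k _ => by rw [mul_sub]
    have hnormc : ‖c - p'‖ < 1 := by
      rw [hsub]
      calc ‖∑ k, s k * (b k - star (s k))‖ ≤ ∑ k, ‖s k * (b k - star (s k))‖ :=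
            norm_sum_le _ _
        _ ≤ ∑ k : Fin n, ‖b k - star (s k)‖ := Finset.sum_le_sum fun k _ => by
            calc ‖s k * (b k - star (s k))‖ ≤ ‖s k‖ * ‖b k - star (s k)‖ := norm_mul_le _ _
              _ = ‖b k - star (s k)‖ := by rw [hsn k, one_mul]
        _ ≤ ∑ _k : Fin n, ((1:ℝ)/(n+1)) := Finset.sum_le_sum fun k _ => le_of_lt (hbk k)
        _ = n * ((1:ℝ)/(n+1)) := by
            rw [Finset.sum_const, Finset.card_univ, Fintype.card_fin, nsmul_eq_mul]
        _ < 1 := by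
            rw [mul_one_div, div_lt_one (by positivity)]
            linarith
    set r : A := p' * (c - p') * p' with hrdef
    have hrn : ‖r‖ < 1 := by
      have h1 : ‖p' * (c - p') * p'‖ ≤ ‖p'‖ * ‖c - p'‖ * ‖p'‖ :=
        (norm_mul_le _ _).trans (mul_le_mul_of_nonneg_right (norm_mul_le _ _) (norm_nonneg _))
      have h2 : ‖p'‖ * ‖c - p'‖ * ‖p'‖ < 1 := by
        have e1 : ‖p'‖ * ‖c - p'‖ ≤ 1 * ‖c - p'‖ :=
          mul_le_mul_of_nonneg_right hp'n (norm_nonneg _)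
        have e2 : ‖p'‖ * ‖c - p'‖ * ‖p'‖ ≤ (1 * ‖c - p'‖) * 1 :=
          mul_le_mul e1 hp'n (norm_nonneg _) (by positivity)
        calc ‖p'‖ * ‖c - p'‖ * ‖p'‖ ≤ (1 * ‖c - p'‖) * 1 := e2
          _ = ‖c - p'‖ := by ring
          _ < 1 := hnormc
      calc ‖r‖ = ‖p' * (c - p') * p'‖ := by rw [hrdef]
        _ ≤ ‖p'‖ * ‖c - p'‖ * ‖p'‖ := h1
        _ < 1 := h2
    have hZu : IsUnit (1 + r) := by
      have h1 := (Units.oneSub (-r) (by rwa [norm_neg])).isUnit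
      rwa [Units.val_oneSub, sub_neg_eq_add] at h1
    obtain ⟨Z, hZ⟩ := hZu
    have hrp' : r * p' = r := by rw [hrdef, mul_assoc, hp'p']
    have hp'r : p' * r = r := by
      rw [hrdef, ← mul_assoc, ← mul_assoc, hp'p']
    have hZp' : (Z : A) * p' = p' * Z := by
      rw [hZ, add_mul, mul_add, one_mul, mul_one, hrp', hp'r]
    have hZip' : (↑Z⁻¹ : A) * p' = p' * ↑Z⁻¹ := by
      calc (↑Z⁻¹ : A) * p' = ↑Z⁻¹ * p' * (↑Z * ↑Z⁻¹) := by rw [Z.mul_inv, mul_one]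
        _ = ↑Z⁻¹ * (p' * ↑Z) * ↑Z⁻¹ := by simp only [mul_assoc]
        _ = ↑Z⁻¹ * (↑Z * p') * ↑Z⁻¹ := by rw [hZp']
        _ = p' * ↑Z⁻¹ := by rw [← mul_assoc, Z.inv_mul, one_mul]
    have hcp'2 : c * p' = ↑Z * p' := by
      have h1 : c * p' = p' * c * p' := by
        nth_rewrite 1 [← hp'c]
        rfl
      have h2 : p' * c * p' = p' + r := by
        rw [hrdef, mul_sub, sub_mul, hp'p', hp'p']
        abel
      have h3 : (↑Z : A) * p' = p' + r := by rw [hZ, add_mul, one_mul, hrp']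
      rw [h1, h2, h3]
    have hcz : c * (↑Z⁻¹ * p') = p' := by
      rw [hZip', ← mul_assoc, hcp'2, mul_assoc, ← hZip', ← mul_assoc, Z.mul_inv, one_mul]
    set ξ : A := W - ↑Z⁻¹ * p' * (c * W) with hξdef
    have hcxi : c * ξ = 0 := by
      rw [hξdef, mul_sub]
      rw [show c * (↑Z⁻¹ * p' * (c * W)) = (c * (↑Z⁻¹ * p')) * (c * W) from by
        simp only [mul_assoc]]
      have h9 : p' * (c * W) = c * W := by rw [← mul_assoc, hp'c]
      rw [hcz, h9, sub_self]
    have hWxi : star W * ξ = 1 := by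
      rw [hξdef, mul_sub, hWW]
      have h5 : star W * (↑Z⁻¹ * p' * (c * W)) = 0 := by
        rw [hZip']
        rw [show star W * (p' * ↑Z⁻¹ * (c * W)) = (star W * p') * (↑Z⁻¹ * (c * W)) from by
          simp only [mul_assoc]]
        have h6 : star W * p' = 0 := by
          have h7 := congrArg star hp'W
          rwa [star_mul, hp'sa, star_zero] at h7
        rw [h6, zero_mul]
      rw [h5, sub_zero]
    obtain ⟨U, hU⟩ := hD
    have hxi0 : ξ = 0 := by
      have h8 : (∑ k, star (b k) * b k) * ξ = 0 := by
        rw [← hcc, mul_assoc, hcxi, mul_zero]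
      calc ξ = ↑U⁻¹ * ((∑ k, star (b k) * b k) * ξ) := by
            rw [← hU, ← mul_assoc, U.inv_mul, one_mul]
        _ = 0 := by rw [h8, mul_zero]
    rw [hxi0, mul_zero] at hWxi
    exact hA.1 hWxi
  have hempty : {N : ℕ∞ | ∃ n : ℕ, 1 ≤ n ∧ N = n ∧ Dense (Lg A n)} = ∅ := by
    ext N
    simp only [Set.mem_setOf_eq, Set.mem_empty_iff_false, iff_false]
    rintro ⟨n, hn, _, hd⟩
    exact hnd n hn hd
  unfold tsr
  rw [hempty, sInf_empty]
end

section
/- If A is a unital C*-algebra with tsr(A) = 1, then tsr(M_n(A)) = 1 for every n ∈ ℕ, where M_n(A) denotes the n×n matrices over A. -/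
section Aux
set_option maxHeartbeats 1000000



open Matrix in
theorem myFromBlocks_eq {m n α : Type*} [Fintype m] [Fintype n] [DecidableEq m] [DecidableEq n]
    [Ring α] (A : Matrix m m α) (B : Matrix m n α) (C : Matrix n m α)
    (D : Matrix n n α) [Invertible A] :
    fromBlocks A B C D =
      fromBlocks 1 0 (C * ⅟ A) 1 * fromBlocks A 0 0 (D - C * ⅟ A * B) *
        fromBlocks 1 (⅟ A * B) 0 1 := by
  simp only [fromBlocks_multiply, Matrix.mul_zero, Matrix.zero_mul, add_zero, zero_add,
    Matrix.one_mul, Matrix.mul_one, invOf_mul_self, Matrix.mul_invOf_cancel_left,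
    Matrix.invOf_mul_cancel_right, Matrix.mul_assoc, add_sub_cancel]

open Matrix in
noncomputable def myZero₂₁Inv {m n α : Type*} [Fintype m] [Fintype n] [DecidableEq m]
    [DecidableEq n] [Ring α] (A : Matrix m m α) (B : Matrix m n α) (D : Matrix n n α)
    [Invertible A] [Invertible D] : Invertible (fromBlocks A B 0 D) where
  invOf := fromBlocks (⅟ A) (-(⅟ A * B * ⅟ D)) 0 (⅟ D)
  invOf_mul_self := by
    simp_rw [fromBlocks_multiply, Matrix.mul_zero, Matrix.zero_mul, zero_add, add_zero,
      Matrix.neg_mul, invOf_mul_self, Matrix.invOf_mul_cancel_right, add_neg_cancel,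
      fromBlocks_one]
  mul_invOf_self := by
    simp only [fromBlocks_multiply, Matrix.mul_zero, Matrix.zero_mul, zero_add, add_zero,
      Matrix.mul_neg, ← Matrix.mul_assoc, mul_invOf_self, Matrix.one_mul, neg_add_cancel, add_neg_cancel, neg_zero, add_zero, zero_add,
      fromBlocks_one]
  
open Matrix in
noncomputable def myZero₁₂Inv {m n α : Type*} [Fintype m] [Fintype n] [DecidableEq m]
    [DecidableEq n] [Ring α] (A : Matrix m m α) (C : Matrix n m α) (D : Matrix n n α)
    [Invertible A] [Invertible D] : Invertible (fromBlocks A 0 C D) where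
  invOf := fromBlocks (⅟ A) 0 (-(⅟ D * C * ⅟ A)) (⅟ D)
  invOf_mul_self := by
    simp_rw [fromBlocks_multiply, Matrix.mul_zero, Matrix.zero_mul, zero_add, add_zero,
      Matrix.neg_mul, invOf_mul_self, Matrix.invOf_mul_cancel_right, neg_add_cancel,
      fromBlocks_one]
  mul_invOf_self := by
    simp only [fromBlocks_multiply, Matrix.mul_zero, Matrix.zero_mul, zero_add, add_zero,
      Matrix.mul_neg, ← Matrix.mul_assoc, mul_invOf_self, Matrix.one_mul, neg_add_cancel, add_neg_cancel, neg_zero, add_zero, zero_add,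
      fromBlocks_one]

open Matrix in
noncomputable def myFromBlocks₁₁Inv {m n α : Type*} [Fintype m] [Fintype n] [DecidableEq m]
    [DecidableEq n] [Ring α] (A : Matrix m m α) (B : Matrix m n α) (C : Matrix n m α)
    (D : Matrix n n α) [Invertible A] [Invertible (D - C * ⅟ A * B)] :
    Invertible (fromBlocks A B C D) := by
  rw [myFromBlocks_eq A B C D]
  letI : Invertible (1 : Matrix m m α) := invertibleOne
  letI : Invertible (1 : Matrix n n α) := invertibleOne
  letI i1 := myZero₁₂Inv (1 : Matrix m m α) (C * ⅟ A) (1 : Matrix n n α)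
  letI i2 := myZero₂₁Inv A (0 : Matrix m n α) (D - C * ⅟ A * B)
  letI i3 := myZero₂₁Inv (1 : Matrix m m α) (⅟ A * B) (1 : Matrix n n α)
  letI i4 := invertibleMul (fromBlocks (1 : Matrix m m α) 0 (C * ⅟ A) 1)
    (fromBlocks A 0 0 (D - C * ⅟ A * B))
  exact invertibleMul _ _


open Matrix in
theorem matrix_unit_dense {R : Type*} [NormedRing R]
    (h : ∀ (x : R) (ε : ℝ), 0 < ε → ∃ u, IsUnit u ∧ ‖u - x‖ < ε) :
    ∀ (n : ℕ) (M : Matrix (Fin n) (Fin n) R) (ε : ℝ), 0 < ε →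
      ∃ M' : Matrix (Fin n) (Fin n) R, IsUnit M' ∧ ∀ i j, ‖M' i j - M i j‖ < ε := by
  intro n
  induction n with
  | zero =>
    intro M ε hε
    exact ⟨M, by rw [Subsingleton.elim M 1]; exact isUnit_one, fun i => i.elim0⟩
  | succ n IH =>
    intro M ε hε
    set e : Fin 1 ⊕ Fin n ≃ Fin (n + 1) := finSumFinEquiv.trans (finCongr (by omega)) with he
    set N : Matrix (Fin 1 ⊕ Fin n) (Fin 1 ⊕ Fin n) R := reindex e.symm e.symm M with hN
    obtain ⟨a', ha', haε⟩ := h (N.toBlocks₁₁ 0 0) ε hε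
    obtain ⟨u, hu⟩ := ha'
    set A1 : Matrix (Fin 1) (Fin 1) R := of fun _ _ => a' with hA1
    haveI : Invertible A1 := by
      refine ⟨of fun _ _ => (↑u⁻¹ : R), ?_, ?_⟩ <;>
      · ext i j
        fin_cases i; fin_cases j
        simp [hA1, Matrix.mul_apply, Matrix.one_apply, ← hu]
    obtain ⟨S, hSu, hSε⟩ := IH (N.toBlocks₂₂ - N.toBlocks₂₁ * ⅟A1 * N.toBlocks₁₂) ε hε
    haveI : Invertible S := hSu.invertible
    set D1 := S + N.toBlocks₂₁ * ⅟A1 * N.toBlocks₁₂ with hD1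
    haveI : Invertible (D1 - N.toBlocks₂₁ * ⅟A1 * N.toBlocks₁₂) := by
      rw [hD1, add_sub_cancel_right]; infer_instance
    set N' : Matrix (Fin 1 ⊕ Fin n) (Fin 1 ⊕ Fin n) R :=
      fromBlocks A1 N.toBlocks₁₂ N.toBlocks₂₁ D1 with hN'
    haveI : Invertible N' := myFromBlocks₁₁Inv _ _ _ _
    refine ⟨reindex e e N', ?_, ?_⟩
    · have : reindex e e N' = Matrix.reindexAlgEquiv ℕ R e N' := rfl
      rw [this]
      exact (isUnit_of_invertible N').map _
    · intro i j
      have hM : M i j = N (e.symm i) (e.symm j) := by simp [hN]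
      have hM' : reindex e e N' i j = N' (e.symm i) (e.symm j) := by simp
      rw [hM, hM']
      have hgoal : N (e.symm i) (e.symm j) = fromBlocks N.toBlocks₁₁ N.toBlocks₁₂
          N.toBlocks₂₁ N.toBlocks₂₂ (e.symm i) (e.symm j) := by rw [N.fromBlocks_toBlocks]
      rw [hgoal]
      rcases hi : e.symm i with k | k <;> rcases hj : e.symm j with l | l
      · have hk : k = 0 := Subsingleton.elim _ _
        have hl : l = 0 := Subsingleton.elim _ _
        subst hk; subst hl
        simpa [hN', hA1, fromBlocks] using haε
      · simpa [hN', fromBlocks] using hε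
      · simpa [hN', fromBlocks] using hε
      · have := hSε k l
        have harr : N' (Sum.inr k) (Sum.inr l) - fromBlocks N.toBlocks₁₁ N.toBlocks₁₂
            N.toBlocks₂₁ N.toBlocks₂₂ (Sum.inr k) (Sum.inr l)
            = S k l - (N.toBlocks₂₂ - N.toBlocks₂₁ * ⅟A1 * N.toBlocks₁₂) k l := by
          simp [hN', hD1, fromBlocks, Matrix.sub_apply, Matrix.add_apply]
          abel
        rw [harr]
        exact this



/-- From density of `Lg A 1`, every left-invertible element is invertible. -/
theorem isUnit_of_leftInv {A : Type*} [NormedRing A] [StarRing A] [CompleteSpace A]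
    (hd : Dense (Lg A 1)) : ∀ b c : A, c * b = 1 → IsUnit b := by
  -- first: every element has left-invertible elements arbitrarily close
  have happrox : ∀ (x : A) (ε : ℝ), 0 < ε → ∃ a : A, (∃ d, d * a = 1) ∧ ‖a - x‖ < ε := by
    intro x ε hε
    obtain ⟨f, hfball, hfLg⟩ := Metric.dense_iff.mp hd (fun _ => x) ε hε
    refine ⟨f 0, ?_, ?_⟩
    · have h1 : IsUnit (star (f 0) * f 0) := by
        have := hfLg
        simpa [Lg, Fin.sum_univ_one] using this
      obtain ⟨v, hv⟩ := h1
      exact ⟨(↑v⁻¹ : A) * star (f 0), by rw [mul_assoc, ← hv, Units.inv_mul]⟩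
    · have := (dist_pi_lt_iff hε).mp (Metric.mem_ball.mp hfball) 0
      simpa [dist_eq_norm] using this
  -- key step
  have key : ∀ b : A, (∃ c, c * b = 1) → IsUnit b := by
    intro b ⟨c, hc⟩
    by_cases hb0 : b = 0
    · subst hb0
      rw [mul_zero] at hc
      rw [hc]
      exact isUnit_one
    · obtain ⟨a, ⟨d, hda⟩, hac⟩ := happrox c ((‖b‖ + 1)⁻¹) (by positivity)
      have hbpos : 0 < ‖b‖ := norm_pos_iff.mpr hb0
      -- ‖a * b - 1‖ < 1
      have hab : ‖(1 : A) - a * b‖ < 1 := by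
        have : (1 : A) - a * b = -((a - c) * b) := by rw [sub_mul, hc, neg_sub]
        rw [this, norm_neg]
        calc ‖(a - c) * b‖ ≤ ‖a - c‖ * ‖b‖ := norm_mul_le _ _
          _ < (‖b‖ + 1)⁻¹ * (‖b‖ + 1) := by
              apply mul_lt_mul' (le_of_lt hac) (by linarith) (norm_nonneg b)
              positivity
          _ = 1 := inv_mul_cancel₀ (by positivity)
      let w : Aˣ := Units.oneSub _ hab
      have hw : (↑w : A) = a * b := by simp [w, Units.oneSub]
      -- a is a unit
      have hau : IsUnit a := by
        have hright : a * (b * ↑w⁻¹) = 1 := by rw [← mul_assoc, ← hw, Units.mul_inv]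
        have : d = b * ↑w⁻¹ := by
          calc d = d * (a * (b * ↑w⁻¹)) := by rw [hright, mul_one]
            _ = (d * a) * (b * ↑w⁻¹) := by rw [mul_assoc]
            _ = b * ↑w⁻¹ := by rw [hda, one_mul]
        exact ⟨⟨a, b * ↑w⁻¹, hright, this ▸ hda⟩, rfl⟩
      -- b = a⁻¹ * (a * b)
      obtain ⟨ua, hua⟩ := hau
      have : b = (↑ua⁻¹ : A) * (a * b) := by rw [← mul_assoc, ← hua, Units.inv_mul, one_mul]
      rw [this]
      exact (ua⁻¹.isUnit).mul (hw ▸ w.isUnit)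
  exact fun b c hc => key b ⟨c, hc⟩

/-- Density of units from density of `Lg A 1`. -/
theorem dense_units_of_dense_lg {A : Type*} [NormedRing A] [StarRing A] [CompleteSpace A]
    (hd : Dense (Lg A 1)) : ∀ (x : A) (ε : ℝ), 0 < ε → ∃ u : A, IsUnit u ∧ ‖u - x‖ < ε := by
  intro x ε hε
  obtain ⟨f, hfball, hfLg⟩ := Metric.dense_iff.mp hd (fun _ => x) ε hε
  have h1 : IsUnit (star (f 0) * f 0) := by simpa [Lg, Fin.sum_univ_one] using hfLg
  obtain ⟨v, hv⟩ := h1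
  refine ⟨f 0, isUnit_of_leftInv hd (f 0) ((↑v⁻¹ : A) * star (f 0))
    (by rw [mul_assoc, ← hv, Units.inv_mul]), ?_⟩
  have := (dist_pi_lt_iff hε).mp (Metric.mem_ball.mp hfball) 0
  simpa [dist_eq_norm] using this



noncomputable def Emat {n : ℕ} (i j : Fin n) : MatrixAlg n :=
  Matrix.toEuclideanCLM (𝕜 := ℂ) (Matrix.single i j 1)

theorem Emat_mul {n : ℕ} (i j k l : Fin n) :
    Emat i j * Emat k l = if j = k then Emat i l else 0 := by
  rw [Emat, Emat, ← map_mul]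
  by_cases h : j = k
  · subst h
    rw [Matrix.single_mul_single_same, one_mul, if_pos rfl, Emat]
  · rw [Matrix.single_mul_single_of_ne (h := h), map_zero, if_neg h]

theorem Emat_sum {n : ℕ} : ∑ i : Fin n, Emat i i = (1 : MatrixAlg n) := by
  simp only [Emat]
  rw [← map_sum, ← map_one (Matrix.toEuclideanCLM (𝕜 := ℂ) (n := Fin n))]
  congr 1
  ext a b
  simp only [Matrix.sum_apply, Matrix.single, Matrix.one_apply, Matrix.of_apply]
  by_cases hab : a = b
  · subst hab; simp
  · rw [if_neg hab, Finset.sum_eq_zero]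
    intro i _
    by_cases hia : i = a
    · subst hia; simp [Ne.symm hab, hab]
    · simp [hia]

theorem Emat_star {n : ℕ} (i j : Fin n) : star (Emat i j) = Emat j i := by
  rw [Emat, Emat, ← map_star]
  congr 1
  ext a b
  simp only [Matrix.star_eq_conjTranspose, Matrix.conjTranspose_apply, Matrix.single,
    Matrix.of_apply]
  by_cases h : j = a ∧ i = b
  · obtain ⟨h1, h2⟩ := h; subst h1; subst h2; simp
  · rw [if_neg h, if_neg (by tauto)]
    simp

theorem Emat_decomp {n : ℕ} (z : MatrixAlg n) :
    z = ∑ i, ∑ j, ((Matrix.toEuclideanCLM (𝕜 := ℂ) (n := Fin n)).symm z i j) • Emat i j := by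
  simp only [Emat, ← map_smul, ← map_sum, Matrix.smul_single, smul_eq_mul, mul_one]
  conv_lhs => rw [← StarAlgEquiv.apply_symm_apply (Matrix.toEuclideanCLM (𝕜 := ℂ) (n := Fin n)) z]
  congr 1
  exact Matrix.matrix_eq_sum_single _

set_option maxHeartbeats 2000000 in
open Matrix in
theorem dense_units_tensor {A : Type*} [CStarAlgebra A] {n : ℕ} {T : Type*} [CStarAlgebra T]
    (t : CStarTensor A (MatrixAlg n) T)
    (hMat : ∀ (M : Matrix (Fin n) (Fin n) A) (ε : ℝ), 0 < ε →
      ∃ M' : Matrix (Fin n) (Fin n) A, IsUnit M' ∧ ∀ i j, ‖M' i j - M i j‖ < ε)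
    (x : T) (ε : ℝ) (hε : 0 < ε) : ∃ u : T, IsUnit u ∧ ‖u - x‖ < ε := by
  classical
  set Φ : Matrix (Fin n) (Fin n) A → T :=
    fun M => ∑ p : Fin n × Fin n, t.ι₁ (M p.1 p.2) * t.ι₂ (Emat p.1 p.2) with hΦ
  have hcomm : ∀ (a : A) (z : MatrixAlg n), t.ι₂ z * t.ι₁ a = t.ι₁ a * t.ι₂ z :=
    fun a z => (t.comm a z).symm
  have hrearr : ∀ (a b y z : T), (y * b = b * y) → (a * y) * (b * z) = (a * b) * (y * z) := by
    intro a b y z hyz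
    rw [mul_assoc, ← mul_assoc y b z, hyz, mul_assoc b y z, ← mul_assoc]
  have hmul : ∀ M N, Φ (M * N) = Φ M * Φ N := by
    intro M N
    have term : ∀ (i j k l : Fin n), (t.ι₁ (M i j) * t.ι₂ (Emat i j)) *
        (t.ι₁ (N k l) * t.ι₂ (Emat k l)) =
        if j = k then t.ι₁ (M i j * N k l) * t.ι₂ (Emat i l) else 0 := by
      intro i j k l
      rw [hrearr _ _ _ _ (hcomm (N k l) (Emat i j)), ← _root_.map_mul, ← _root_.map_mul, Emat_mul]
      by_cases h : j = k
      · rw [if_pos h, if_pos h]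
      · rw [if_neg h, if_neg h, _root_.map_zero, mul_zero]
    have L : Φ M * Φ N =
        ∑ i, ∑ j, ∑ l, t.ι₁ (M i j * N j l) * t.ι₂ (Emat i l) := by
      rw [hΦ]
      rw [Finset.sum_mul_sum]
      simp only [term, Fintype.sum_prod_type]
      apply Finset.sum_congr rfl; intro i _
      apply Finset.sum_congr rfl; intro j _
      rw [Finset.sum_comm]
      simp only [Finset.sum_ite_eq, Finset.mem_univ, if_true]
    have R : Φ (M * N) =
        ∑ i, ∑ j, ∑ l, t.ι₁ (M i j * N j l) * t.ι₂ (Emat i l) := by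
      rw [hΦ]
      simp only [Fintype.sum_prod_type, Matrix.mul_apply, _root_.map_sum, Finset.sum_mul]
      apply Finset.sum_congr rfl; intro i _
      rw [Finset.sum_comm]
    rw [L, R]
  have hone : Φ 1 = 1 := by
    rw [hΦ]
    simp only [Fintype.sum_prod_type, Matrix.one_apply, apply_ite t.ι₁, _root_.map_one, _root_.map_zero,
      ite_mul, one_mul, zero_mul]
    simp only [Finset.sum_ite_eq, Finset.mem_univ, if_true]
    rw [← _root_.map_sum, Emat_sum, _root_.map_one]
  have hsub : ∀ M N, Φ (M - N) = Φ M - Φ N := by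
    intro M N
    simp only [hΦ, Matrix.sub_apply, _root_.map_sub, sub_mul, Finset.sum_sub_distrib]
  have hadd : ∀ M N, Φ (M + N) = Φ M + Φ N := by
    intro M N
    simp only [hΦ, Matrix.add_apply, _root_.map_add, add_mul, Finset.sum_add_distrib]
  have hsmul : ∀ (c : ℂ) M, Φ (c • M) = c • Φ M := by
    intro c M
    simp only [hΦ, Matrix.smul_apply, _root_.map_smul, smul_mul_assoc, Finset.smul_sum]
  have hstar : ∀ M, star (Φ M) = Φ Mᴴ := by
    intro M
    have L : star (Φ M) = ∑ i, ∑ j, t.ι₁ (star (M i j)) * t.ι₂ (Emat j i) := by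
      rw [hΦ]
      simp only [star_sum, StarMul.star_mul, Fintype.sum_prod_type]
      simp only [← map_star, Emat_star, hcomm]
    have R : Φ Mᴴ = ∑ i, ∑ j, t.ι₁ (star (M j i)) * t.ι₂ (Emat i j) := by
      rw [hΦ]
      simp only [Fintype.sum_prod_type, Matrix.conjTranspose_apply]
    rw [L, R]
    exact Finset.sum_comm
  have hι₁ : ∀ a : A, t.ι₁ a ∈ Set.range Φ := by
    intro a
    refine ⟨Matrix.diagonal (fun _ => a), ?_⟩
    rw [hΦ]
    simp only [Fintype.sum_prod_type, Matrix.diagonal_apply, apply_ite t.ι₁, _root_.map_zero,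
      ite_mul, zero_mul]
    simp only [Finset.sum_ite_eq, Finset.mem_univ, if_true]
    rw [← Finset.mul_sum, ← _root_.map_sum, Emat_sum, _root_.map_one, mul_one]
  have hι₂ : ∀ z : MatrixAlg n, t.ι₂ z ∈ Set.range Φ := by
    intro z
    refine ⟨Matrix.of fun i j =>
      ((Matrix.toEuclideanCLM (𝕜 := ℂ) (n := Fin n)).symm z i j) • (1 : A), ?_⟩
    rw [hΦ]
    simp only [Fintype.sum_prod_type, Matrix.of_apply, _root_.map_smul, _root_.map_one, smul_mul_assoc, one_mul]
    simp only [← _root_.map_smul, ← _root_.map_sum]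
    rw [← Emat_decomp]
  have hdense : Dense (Set.range Φ) := by
    let S : StarSubalgebra ℂ T :=
      { carrier := Set.range Φ
        mul_mem' := by rintro _ _ ⟨M, rfl⟩ ⟨N, rfl⟩; exact ⟨M * N, hmul M N⟩
        add_mem' := by rintro _ _ ⟨M, rfl⟩ ⟨N, rfl⟩; exact ⟨M + N, hadd M N⟩
        algebraMap_mem' := by
          intro c
          refine ⟨c • 1, ?_⟩
          rw [hsmul, hone, Algebra.algebraMap_eq_smul_one]
        star_mem' := by rintro _ ⟨M, rfl⟩; exact ⟨Mᴴ, (hstar M).symm⟩ }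
    have h1 : StarAlgebra.adjoin ℂ (Set.range (⇑t.ι₁) ∪ Set.range (⇑t.ι₂)) ≤ S := by
      apply StarAlgebra.adjoin_le
      rintro y (⟨a, rfl⟩ | ⟨z, rfl⟩)
      · exact hι₁ a
      · exact hι₂ z
    rw [dense_iff_closure_eq]
    apply Set.eq_univ_of_univ_subset
    intro y _
    have h2 : y ∈ (StarAlgebra.adjoin ℂ
        (Set.range (⇑t.ι₁) ∪ Set.range (⇑t.ι₂))).topologicalClosure := by
      rw [t.generates]; trivial
    have h3 : y ∈ closure (StarAlgebra.adjoin ℂ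
        (Set.range (⇑t.ι₁) ∪ Set.range (⇑t.ι₂)) : Set T) := h2
    exact closure_mono (fun w hw => h1 hw) h3
  obtain ⟨y, hyball, M, rfl⟩ := Metric.dense_iff.mp hdense x (ε / 2) (by positivity)
  set K : ℝ := ∑ p : Fin n × Fin n, ‖t.ι₂ (Emat p.1 p.2)‖ with hK
  have hK0 : 0 ≤ K := Finset.sum_nonneg fun p _ => norm_nonneg _
  set δ : ℝ := (ε / 2) / (K + 1) with hδ
  have hδ0 : 0 < δ := by positivity
  obtain ⟨M', hM'u, hM'ε⟩ := hMat M δ hδ0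
  obtain ⟨W, hW⟩ := hM'u
  have hΦu : IsUnit (Φ M') := by
    refine ⟨⟨Φ M', Φ (Units.val W⁻¹), ?_, ?_⟩, rfl⟩
    · rw [← hmul, ← hW, Units.mul_inv, hone]
    · rw [← hmul, ← hW, Units.inv_mul, hone]
  refine ⟨Φ M', hΦu, ?_⟩
  have hbound : ‖Φ M' - Φ M‖ < ε / 2 := by
    rw [← hsub]
    have h1 : ‖Φ (M' - M)‖ ≤ ∑ p : Fin n × Fin n, ‖M' p.1 p.2 - M p.1 p.2‖ *
        ‖t.ι₂ (Emat p.1 p.2)‖ := by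
      rw [hΦ]
      refine (norm_sum_le _ _).trans (Finset.sum_le_sum fun p _ => ?_)
      refine (norm_mul_le _ _).trans ?_
      have hle := NonUnitalStarAlgHom.norm_apply_le t.ι₁ ((M' - M) p.1 p.2)
      have h2 : (M' - M) p.1 p.2 = M' p.1 p.2 - M p.1 p.2 := rfl
      rw [h2] at hle
      exact mul_le_mul_of_nonneg_right hle (norm_nonneg _)
    have h2 : ∑ p : Fin n × Fin n, ‖M' p.1 p.2 - M p.1 p.2‖ * ‖t.ι₂ (Emat p.1 p.2)‖
        ≤ δ * K := by
      rw [hK, Finset.mul_sum]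
      exact Finset.sum_le_sum fun p _ =>
        mul_le_mul_of_nonneg_right (le_of_lt (hM'ε p.1 p.2)) (norm_nonneg _)
    have h3 : δ * K < ε / 2 := by
      have h5 : δ * K < δ * (K + 1) := by
        apply mul_lt_mul_of_pos_left _ hδ0
        linarith
      have h4 : δ * (K + 1) = ε / 2 := by
        rw [hδ]
        field_simp
      linarith
    linarith [h1, h2, h3]
  have hyx : ‖Φ M - x‖ < ε / 2 := by
    have hd := Metric.mem_ball.mp hyball
    rw [dist_eq_norm] at hd
    linarith [hd]
  calc ‖Φ M' - x‖ = ‖(Φ M' - Φ M) + (Φ M - x)‖ := by rw [sub_add_sub_cancel]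
    _ ≤ ‖Φ M' - Φ M‖ + ‖Φ M - x‖ := norm_add_le _ _
    _ < ε / 2 + ε / 2 := by linarith
    _ = ε := by ring

end Aux

/-- if `tsr A = 1` then `tsr (Mₙ(A)) = 1` for every `n`. Here `Mₙ(A)` is
realized as the C*-tensor product `A ⊗ Mₙ(ℂ)` (with `Mₙ(ℂ)` the operators on `ℂⁿ`), via
the canonical identification `Mₙ(A) ≅ A ⊗ Mₙ(ℂ)`. -/


theorem tsr_matrix_eq_one (A : Type*) [CStarAlgebra A] (h : tsr A = 1) (n : ℕ)
    (T : Type*) [CStarAlgebra T] (t : CStarTensor A (MatrixAlg n) T) :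
    tsr T = 1 := by
  classical
  have hA : Dense (Lg A 1) := by
    by_contra hA
    have h2 : (2 : ℕ∞) ≤ tsr A := by
      apply le_sInf
      rintro N ⟨m, hm, rfl, hdm⟩
      by_cases hm1 : m = 1
      · subst hm1; exact absurd hdm hA
      · have h3 : 2 ≤ m := by omega
        exact_mod_cast h3
    rw [h] at h2
    norm_num at h2
  have hAu := dense_units_of_dense_lg hA
  have hMat := matrix_unit_dense hAu n
  have hTu : ∀ (x : T) (ε : ℝ), 0 < ε → ∃ u : T, IsUnit u ∧ ‖u - x‖ < ε :=
    fun x ε hε => dense_units_tensor t hMat x ε hε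
  have hdT : Dense (Lg T 1) := by
    rw [Metric.dense_iff]
    intro f r hr
    obtain ⟨u, hu, hux⟩ := hTu (f 0) r hr
    refine ⟨fun _ => u, Metric.mem_ball.mpr ?_, ?_⟩
    · rw [dist_pi_lt_iff hr]
      intro b
      have hb : b = 0 := Subsingleton.elim _ _
      subst hb
      rw [dist_eq_norm]
      exact hux
    · show IsUnit _
      simp only [Fin.sum_univ_one]
      exact (hu.star).mul hu
  apply le_antisymm
  · exact sInf_le ⟨1, le_refl 1, Nat.cast_one.symm, hdT⟩
  · apply le_sInf
    rintro N ⟨m, hm, rfl, -⟩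
    exact_mod_cast hm
end

section
/- If v is an isometry in a unital C*-algebra A (v*v = 1) and vv* ≠ 1, then v cannot be approximated in norm by invertible elements of A: specifically, for every invertible b ∈ A, ‖v − b‖ ≥ 1. -/
/-- a non-unitary isometry is at distance at least `1` from every
invertible element. -/
theorem one_le_dist_isometry_invertible (A : Type*) [CStarAlgebra A]
    (v : A) (hv : star v * v = 1) (hv' : v * star v ≠ 1) :
    ∀ b : A, IsUnit b → 1 ≤ ‖v - b‖ := by
  intro b hb
  by_contra h
  have : Nontrivial A := ⟨_, _, hv'⟩
  push_neg at h
  -- ‖v‖ = 1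
  have hnv : ‖v‖ = 1 := by
    have h2 : ‖v‖ * ‖v‖ = 1 := by
      rw [← CStarRing.norm_star_mul_self, hv, norm_one]
    nlinarith [norm_nonneg v]
  have hstar : ‖star v‖ = 1 := by rw [norm_star, hnv]
  -- ‖1 - star v * b‖ < 1
  have key : ‖1 - star v * b‖ < 1 := by
    calc ‖1 - star v * b‖ = ‖star v * (v - b)‖ := by
          rw [mul_sub, hv]
      _ ≤ ‖star v‖ * ‖v - b‖ := norm_mul_le _ _
      _ = ‖v - b‖ := by rw [hstar, one_mul]
      _ < 1 := h
  -- hence star v * b is a unit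
  have hu : IsUnit (star v * b) := by
    have := Units.oneSub (1 - star v * b) key
    have h1 : ((Units.oneSub (1 - star v * b) key : Aˣ) : A) = star v * b := by
      simp [Units.oneSub]
    exact ⟨Units.oneSub (1 - star v * b) key, h1⟩
  -- star v is a unit, hence v is a unit
  have hsvu : IsUnit (star v) := by
    have : star v = (star v * b) * ↑hb.unit⁻¹ := by
      rw [mul_assoc, IsUnit.mul_val_inv, mul_one]
    rw [this]
    exact hu.mul hb.unit⁻¹.isUnit
  have hvu : IsUnit v := by
    have := hsvu.star
    rwa [star_star] at this
  -- but then v * star v = 1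
  apply hv'
  calc v * star v = v * (star v * v) * ↑hvu.unit⁻¹ := by
        rw [mul_assoc, mul_assoc, ← mul_assoc v, IsUnit.mul_val_inv, mul_one]
    _ = 1 := by rw [hv, mul_one, IsUnit.mul_val_inv]
end
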